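/- arXiv:1908.07449 — 5 statements merged into one kernel-verified Lean document; each statement's English description precedes it below -/
import Mathlib

section
/- Suppose Assumptions 1 and 2 hold. Then the nonlinear forward-backward map T_FB := (M + A)⁻¹ ∘ (M − C) has full domain and is single-valued: for every x ∈ H there exists a unique point x̂ ∈ H such that Mx − Cx − Mx̂ ∈ A x̂. Moreover, the resulting map x ↦ x̂ is Lipschitz continuous: there exists L' ≥ 0 such that ‖T_FB x − T_FB y‖ ≤ L'‖x − y‖ for all x, y ∈ H. -/
/-- The norm `‖x‖_P := √⟨x, Px⟩` induced by a bounded self-adjoint strongly positive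
linear operator `P`. -/
noncomputable def pnorm {H : Type*} [NormedAddCommGroup H] [InnerProductSpace ℝ H]
    (P : H →L[ℝ] H) (x : H) : ℝ := Real.sqrt (inner ℝ x (P x))

/-- A set-valued operator (identified with its graph) is monotone. -/
def IsMonotoneOp {H : Type*} [NormedAddCommGroup H] [InnerProductSpace ℝ H]
    (A : H → Set H) : Prop :=
  ∀ ⦃x u y v⦄, u ∈ A x → v ∈ A y → (0:ℝ) ≤ inner ℝ (u - v) (x - y)

/-- A set-valued operator is maximally monotone: it is monotone and its graph is not
properly contained in the graph of any monotone operator. -/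
def IsMaxMonotoneOp {H : Type*} [NormedAddCommGroup H] [InnerProductSpace ℝ H]
    (A : H → Set H) : Prop :=
  IsMonotoneOp A ∧ ∀ x u, (∀ y v, v ∈ A y → (0:ℝ) ≤ inner ℝ (u - v) (x - y)) → u ∈ A x

open scoped RealInnerProductSpace
open Filter

section Minty
variable {H : Type*} [NormedAddCommGroup H] [InnerProductSpace ℝ H]

lemma cauchy_of_sq_bound [CompleteSpace H] (f : ℕ → H)
    (hkey : ∀ n m : ℕ, ‖f n - f m‖^2 ≤ 4*(1/(n+1) + 1/(m+1))) : CauchySeq f := by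
  rw [Metric.cauchySeq_iff']
  intro eps heps
  obtain ⟨N, hN⟩ := exists_nat_gt (8/eps^2)
  refine ⟨N, fun n hn => ?_⟩
  have h2 : (1:ℝ)/(n+1) ≤ 1/(N+1) := by
    apply one_div_le_one_div_of_le (by positivity)
    have : (N:ℝ) ≤ n := by exact_mod_cast hn
    linarith
  have h3 : ‖f n - f N‖^2 ≤ 8*(1/((N:ℝ)+1)) := by
    have := hkey n N
    linarith
  have hb : (1:ℝ)/((N:ℝ)+1) < eps^2/8 := by
    rw [div_lt_div_iff₀ (by positivity) (by norm_num)]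
    have h8 : (8:ℝ)/eps^2 < (N:ℝ)+1 := lt_of_lt_of_le hN (by linarith)
    rw [div_lt_iff₀ (by positivity)] at h8
    nlinarith
  rw [dist_eq_norm]
  nlinarith [norm_nonneg (f n - f N)]

set_option maxHeartbeats 1000000 in
/-- Core Minty lemma: a maximally monotone operator with nonempty graph has a point
with `-x ∈ A x`, i.e. `0 ∈ (I + A) x`. -/
lemma minty_zero [CompleteSpace H] (A : H → Set H) (hA : IsMaxMonotoneOp A)
    (y0 v0 : H) (h0 : v0 ∈ A y0) : ∃ x : H, -x ∈ A x := by
  classical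
  obtain ⟨hmono, hmax⟩ := hA
  -- Feasibility predicate: `t` dominates the Fitzpatrick pairing at `(x, u)`.
  set Feas : H → H → ℝ → Prop :=
    fun x u t => ∀ y v, v ∈ A y → ⟪x, v⟫ + ⟪y, u⟫ - ⟪y, v⟫ ≤ t with hFeas
  have hfeasG : ∀ y v, v ∈ A y → Feas y v ⟪y, v⟫ := by
    intro y v hv y' v' hv'
    have h := hmono hv hv'
    have h1 : ⟪v - v', y - y'⟫ = ⟪v, y⟫ - ⟪v, y'⟫ - ⟪v', y⟫ + ⟪v', y'⟫ := by
      rw [inner_sub_left, inner_sub_right, inner_sub_right]; ring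
    have c1 := real_inner_comm y v'
    have c2 := real_inner_comm y' v
    have c3 := real_inner_comm y v
    have c4 := real_inner_comm y' v'
    rw [h1] at h; linarith
  -- the value set
  set V : Set ℝ := {r | ∃ x u t, Feas x u t ∧ r = t + ‖x‖^2/2 + ‖u‖^2/2} with hV
  have hVne : V.Nonempty := by
    refine ⟨⟪y0, v0⟫ + ‖y0‖^2/2 + ‖v0‖^2/2, y0, v0, ⟪y0, v0⟫, hfeasG y0 v0 h0, rfl⟩
  have hVbdd : BddBelow V := by
    refine ⟨-(‖v0‖^2/2 + ‖y0‖^2/2 + ⟪y0, v0⟫), ?_⟩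
    rintro r ⟨x, u, t, hf, rfl⟩
    have h1 := hf y0 v0 h0
    have h2 : (0:ℝ) ≤ ‖x + v0‖^2 := sq_nonneg _
    have h3 : (0:ℝ) ≤ ‖u + y0‖^2 := sq_nonneg _
    rw [norm_add_sq_real] at h2 h3
    have c1 := real_inner_comm y0 u
    nlinarith [real_inner_comm x v0]
  set D : ℝ := sInf V with hD
  -- minimizing sequence
  have hseq : ∀ n : ℕ, ∃ x u t, Feas x u t ∧ t + ‖x‖^2/2 + ‖u‖^2/2 < D + 1/(n+1) := by
    intro n
    have hpos : (0:ℝ) < 1/(n+1) := by positivity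
    have : D < D + 1/(n+1) := by linarith
    obtain ⟨r, hr, hrlt⟩ := (csInf_lt_iff hVbdd hVne).mp this
    obtain ⟨x, u, t, hf, rfl⟩ := hr
    exact ⟨x, u, t, hf, hrlt⟩
  choose xs us ts hfs hlt using hseq
  have hDle : ∀ x u t, Feas x u t → D ≤ t + ‖x‖^2/2 + ‖u‖^2/2 := by
    intro x u t hf
    exact csInf_le hVbdd ⟨x, u, t, hf, rfl⟩
  -- key Cauchy-type estimate
  have hkey : ∀ n m : ℕ, ‖xs n - xs m‖^2 + ‖us n - us m‖^2 ≤ 4*(1/(n+1) + 1/(m+1)) := by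
    intro n m
    have hfmid : Feas ((1/2:ℝ) • (xs n + xs m)) ((1/2:ℝ) • (us n + us m))
        ((ts n + ts m)/2) := by
      intro y v hv
      have h1 := hfs n y v hv
      have h2 := hfs m y v hv
      rw [real_inner_smul_left, real_inner_smul_right, inner_add_left, inner_add_right]
      linarith
    have hmid := hDle _ _ _ hfmid
    have e1 : ‖(1/2:ℝ) • (xs n + xs m)‖^2 = (1/4) * ‖xs n + xs m‖^2 := by
      rw [norm_smul, mul_pow]; norm_num
    have e2 : ‖(1/2:ℝ) • (us n + us m)‖^2 = (1/4) * ‖us n + us m‖^2 := by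
      rw [norm_smul, mul_pow]; norm_num
    have p1 := norm_add_sq_real (xs n) (xs m)
    have p2 := norm_sub_sq_real (xs n) (xs m)
    have p3 := norm_add_sq_real (us n) (us m)
    have p4 := norm_sub_sq_real (us n) (us m)
    have b1 := hlt n
    have b2 := hlt m
    have d1 := hDle _ _ _ (hfs n)
    have d2 := hDle _ _ _ (hfs m)
    rw [e1, e2] at hmid
    nlinarith
  -- the sequences are Cauchy
  have hCx : CauchySeq xs := by
    apply cauchy_of_sq_bound
    intro n m
    have := hkey n m
    nlinarith [sq_nonneg ‖us n - us m‖]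
  have hCu : CauchySeq us := by
    apply cauchy_of_sq_bound
    intro n m
    have := hkey n m
    nlinarith [sq_nonneg ‖xs n - xs m‖]
  obtain ⟨p, hp⟩ := cauchySeq_tendsto_of_complete hCx
  obtain ⟨q, hq⟩ := cauchySeq_tendsto_of_complete hCu
  -- the objective values converge to D
  have hgs : Tendsto (fun n => ts n + ‖xs n‖^2/2 + ‖us n‖^2/2) atTop (nhds D) := by
    refine tendsto_of_tendsto_of_tendsto_of_le_of_le tendsto_const_nhds ?_
      (fun n => hDle _ _ _ (hfs n)) (fun n => le_of_lt (hlt n))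
    have : Tendsto (fun n : ℕ => 1 / ((n : ℝ) + 1)) atTop (nhds 0) :=
      tendsto_one_div_add_atTop_nhds_zero_nat
    have h := tendsto_const_nhds (x := D) (f := atTop (α := ℕ)) |>.add this
    simpa using h
  set s : ℝ := D - ‖p‖^2/2 - ‖q‖^2/2 with hs_def
  have hts : Tendsto ts atTop (nhds s) := by
    have hx2 : Tendsto (fun n => ‖xs n‖^2/2) atTop (nhds (‖p‖^2/2)) :=
      ((hp.norm.pow 2).div_const 2)
    have hu2 : Tendsto (fun n => ‖us n‖^2/2) atTop (nhds (‖q‖^2/2)) :=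
      ((hq.norm.pow 2).div_const 2)
    have := (hgs.sub hx2).sub hu2
    have heq : (fun n => ts n + ‖xs n‖^2/2 + ‖us n‖^2/2 - ‖xs n‖^2/2 - ‖us n‖^2/2) = ts := by
      funext n; ring
    rw [heq] at this
    exact this
  -- feasibility of the limit
  have hfeasP : Feas p q s := by
    intro y v hv
    have hle : ∀ n, ⟪xs n, v⟫ + ⟪y, us n⟫ - ⟪y, v⟫ ≤ ts n := fun n => hfs n y v hv
    have h1 : Tendsto (fun n => ⟪xs n, v⟫ + ⟪y, us n⟫ - ⟪y, v⟫) atTop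
        (nhds (⟪p, v⟫ + ⟪y, q⟫ - ⟪y, v⟫)) := by
      exact ((hp.inner tendsto_const_nhds).add (Filter.Tendsto.inner tendsto_const_nhds hq)).sub
        tendsto_const_nhds
    exact le_of_tendsto_of_tendsto' h1 hts hle
  -- variational inequality at the minimizer
  have hVI : ∀ y v, v ∈ A y → 0 ≤ ⟪y, v⟫ - s + ⟪p, y - p⟫ + ⟪q, v - q⟫ := by
    intro y v hv
    set K : ℝ := ‖y - p‖^2 + ‖v - q‖^2 with hK
    have hK0 : 0 ≤ K := by positivity
    have hstep : ∀ t : ℝ, 0 < t → t ≤ 1 →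
        0 ≤ ⟪y, v⟫ - s + ⟪p, y - p⟫ + ⟪q, v - q⟫ + t/2 * K := by
      intro t ht0 ht1
      have hfc : Feas (p + t • (y - p)) (q + t • (v - q)) ((1-t)*s + t*⟪y, v⟫) := by
        intro y' v' hv'
        have h1 := hfeasP y' v' hv'
        have h2 := hfeasG y v hv y' v' hv'
        rw [inner_add_left, inner_add_right, real_inner_smul_left, real_inner_smul_right,
          inner_sub_left, inner_sub_right]
        nlinarith
      have hD2 := hDle _ _ _ hfc
      have e1 : ‖p + t • (y - p)‖^2 = ‖p‖^2 + 2*(t*⟪p, y - p⟫) + t^2*‖y - p‖^2 := by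
        rw [norm_add_sq_real, real_inner_smul_right, norm_smul, mul_pow]
        norm_num [abs_of_pos ht0]
      have e2 : ‖q + t • (v - q)‖^2 = ‖q‖^2 + 2*(t*⟪q, v - q⟫) + t^2*‖v - q‖^2 := by
        rw [norm_add_sq_real, real_inner_smul_right, norm_smul, mul_pow]
        norm_num [abs_of_pos ht0]
      rw [e1, e2] at hD2
      have hDs : D = s + ‖p‖^2/2 + ‖q‖^2/2 := by rw [hs_def]; ring
      rw [hDs] at hD2
      have hfin : 0 ≤ t * (⟪y, v⟫ - s + ⟪p, y - p⟫ + ⟪q, v - q⟫ + t/2 * K) := by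
        rw [hK]; linarith [hD2]
      by_contra hc
      push_neg at hc
      have : t * (⟪y, v⟫ - s + ⟪p, y - p⟫ + ⟪q, v - q⟫ + t/2 * K) < 0 :=
        mul_neg_of_pos_of_neg ht0 hc
      linarith
    by_contra hneg
    push_neg at hneg
    set X : ℝ := ⟪y, v⟫ - s + ⟪p, y - p⟫ + ⟪q, v - q⟫ with hX
    have hXneg : X < 0 := hneg
    set t : ℝ := min 1 (-X/(K+1)) with htdef
    have ht0 : 0 < t := by
      apply lt_min one_pos
      exact div_pos (by linarith) (by linarith)
    have ht1 : t ≤ 1 := min_le_left _ _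
    have h := hstep t ht0 ht1
    have htle : t ≤ -X/(K+1) := min_le_right _ _
    have hKpos : (0:ℝ) < K + 1 := by linarith
    have h1 : t * (K+1) ≤ -X := (le_div_iff₀ hKpos).mp htle
    have h2 : t/2 * K < -X := by nlinarith [mul_nonneg ht0.le hK0]
    linarith
  -- s dominates ⟪p, q⟫
  have hspq : ⟪p, q⟫ ≤ s := by
    by_contra hlt2
    push_neg at hlt2
    have hmem : q ∈ A p := by
      apply hmax
      intro y v hv
      have h1 := hfeasP y v hv
      have e : ⟪q - v, p - y⟫ = ⟪p, q⟫ - ⟪y, q⟫ - ⟪p, v⟫ + ⟪y, v⟫ := by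
        rw [inner_sub_left, inner_sub_right, inner_sub_right]
        rw [real_inner_comm q p, real_inner_comm q y, real_inner_comm v p, real_inner_comm v y]
        ring
      rw [e]; linarith
    have := hfeasP p q hmem
    linarith
  -- conclusion
  have hstar : ∀ y v, v ∈ A y → ‖p + q‖^2 ≤ ⟪p + v, q + y⟫ := by
    intro y v hv
    have h1 := hVI y v hv
    have e1 : ⟪p + v, q + y⟫ = ⟪p, q⟫ + ⟪p, y⟫ + ⟪y, v⟫ + ⟪q, v⟫ := by
      rw [inner_add_left, inner_add_right, inner_add_right]
      rw [real_inner_comm v q, real_inner_comm v y]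
      ring
    have e2 : ‖p + q‖^2 = ‖p‖^2 + 2*⟪p, q⟫ + ‖q‖^2 := norm_add_sq_real p q
    have e3 : ⟪p, y - p⟫ = ⟪p, y⟫ - ‖p‖^2 := by
      rw [inner_sub_right, real_inner_self_eq_norm_sq]
    have e4 : ⟪q, v - q⟫ = ⟪q, v⟫ - ‖q‖^2 := by
      rw [inner_sub_right, real_inner_self_eq_norm_sq]
    rw [e1, e2]
    rw [e3, e4] at h1
    linarith
  have hmem2 : -p ∈ A (-q) := by
    apply hmax
    intro y v hv
    have h1 := hstar y v hv
    have e : ⟪-p - v, -q - y⟫ = ⟪p + v, q + y⟫ := by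
      have : -p - v = -(p + v) := by abel
      have h2 : -q - y = -(q + y) := by abel
      rw [this, h2, inner_neg_neg]
    rw [e]
    exact le_trans (sq_nonneg _) h1
  have hpq0 : p + q = 0 := by
    have h1 := hstar (-q) (-p) hmem2
    have e : ⟪p + -p, q + -q⟫ = 0 := by simp
    rw [e] at h1
    have hn : ‖p + q‖^2 = 0 := le_antisymm h1 (sq_nonneg _)
    have hn2 : ‖p + q‖ = 0 := by
      have h3 := norm_nonneg (p + q)
      nlinarith
    rwa [norm_eq_zero] at hn2
  refine ⟨-q, ?_⟩
  have hqq : -(-q) = -p := by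
    have hp' : p = -q := by
      have : p = -q + (p + q) := by abel
      rw [hpq0] at this; simpa using this
    rw [hp']
  rw [hqq]
  exact hmem2

/-- Resolvent existence for `γ A`. -/
lemma minty_resolvent [CompleteSpace H] (A : H → Set H) (hA : IsMaxMonotoneOp A)
    (y0 v0 : H) (h0 : v0 ∈ A y0) (γ : ℝ) (hγ : 0 < γ) (z : H) :
    ∃ x u, u ∈ A x ∧ z = x + γ • u := by
  set B : H → Set H := fun x => {w | ∃ u, u ∈ A (x + z) ∧ w = γ • u} with hB
  have hBmax : IsMaxMonotoneOp B := by
    constructor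
    · rintro x w y w' ⟨u, hu, rfl⟩ ⟨u', hu', rfl⟩
      have h := hA.1 hu hu'
      have e : (x + z) - (y + z) = x - y := by abel
      rw [e] at h
      rw [← smul_sub, real_inner_smul_left]
      exact mul_nonneg hγ.le h
    · intro x w hw
      refine ⟨γ⁻¹ • w, ?_, by rw [smul_smul, mul_inv_cancel₀ (ne_of_gt hγ), one_smul]⟩
      apply hA.2
      intro y' v' hv'
      have hmem : γ • v' ∈ B (y' - z) := ⟨v', by rwa [sub_add_cancel], rfl⟩
      have h := hw (y' - z) (γ • v') hmem
      have e : x - (y' - z) = (x + z) - y' := by abel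
      rw [e] at h
      have e2 : ⟪γ⁻¹ • w - v', x + z - y'⟫ = γ⁻¹ * ⟪w - γ • v', x + z - y'⟫ := by
        rw [inner_sub_left, inner_sub_left, real_inner_smul_left, real_inner_smul_left]
        field_simp
      rw [e2]
      exact mul_nonneg (inv_nonneg.mpr hγ.le) h
  obtain ⟨x, hx⟩ := minty_zero B hBmax (y0 - z) (γ • v0)
    ⟨v0, by rwa [sub_add_cancel], rfl⟩
  obtain ⟨u, hu, hux⟩ := hx
  refine ⟨x + z, u, hu, ?_⟩
  rw [← hux]
  abel

end Minty

set_option maxHeartbeats 1000000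

/-- under Assumptions 1 and 2 the nonlinear forward-backward map
`T_FB = (M + A)⁻¹ ∘ (M − C)` has full domain, is single-valued, and the resulting map
is Lipschitz continuous. -/
theorem nonlinear_fb_map_well_defined_and_lipschitz
    {H : Type*} [NormedAddCommGroup H] [InnerProductSpace ℝ H] [CompleteSpace H]
    (P Pinv : H →L[ℝ] H)
    (hPsa : IsSelfAdjoint P)
    (hPpos : ∃ c > 0, ∀ x : H, c * ‖x‖ ^ 2 ≤ inner ℝ x (P x))
    (hPinv₁ : P.comp Pinv = ContinuousLinearMap.id ℝ H)
    (hPinv₂ : Pinv.comp P = ContinuousLinearMap.id ℝ H)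
    -- Assumption 1
    (A : H → Set H) (hA : IsMaxMonotoneOp A)
    (β : ℝ) (hβ0 : 0 ≤ β) (hβ4 : β < 4)
    (C : H → H)
    (hC0 : β = 0 → ∀ x y : H, C x = C y)
    (hCpos : 0 < β → ∀ x y : H,
      (1 / β) * pnorm Pinv (C x - C y) ^ 2 ≤ inner ℝ (C x - C y) (x - y))
    (hzer : ∃ x : H, -C x ∈ A x)
    -- Assumption 2
    (M : H → H) (L_M : ℝ)
    (hMsm : ∀ x y : H, pnorm P (x - y) ^ 2 ≤ inner ℝ (M x - M y) (x - y))
    (hMlip : ∀ x y : H, ‖M x - M y‖ ≤ L_M * ‖x - y‖) :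
    (∀ x : H, ∃! xhat : H, M x - C x - M xhat ∈ A xhat) ∧
    (∃ L' : ℝ, 0 ≤ L' ∧ ∀ x y xhat yhat : H,
        M x - C x - M xhat ∈ A xhat → M y - C y - M yhat ∈ A yhat →
        ‖xhat - yhat‖ ≤ L' * ‖x - y‖) := by
  classical
  obtain ⟨c, hc, hcP⟩ := hPpos
  obtain ⟨x0, hx0⟩ := hzer
  -- strong monotonicity of M w.r.t. the usual norm
  have hsm : ∀ x y : H, c * ‖x - y‖^2 ≤ ⟪M x - M y, x - y⟫ := by
    intro x y
    have h0 : (0:ℝ) ≤ ⟪x - y, P (x - y)⟫ := le_trans (by positivity) (hcP (x - y))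
    have h1 : pnorm P (x - y)^2 = ⟪x - y, P (x - y)⟫ := Real.sq_sqrt h0
    have h2 := hMsm x y
    rw [h1] at h2
    exact le_trans (hcP (x - y)) h2
  -- uniqueness
  have huniq : ∀ x xhat yhat : H, M x - C x - M xhat ∈ A xhat →
      M x - C x - M yhat ∈ A yhat → xhat = yhat := by
    intro x xh yh h1 h2
    have hm := hA.1 h1 h2
    have e : (M x - C x - M xh) - (M x - C x - M yh) = -(M xh - M yh) := by abel
    rw [e, inner_neg_left] at hm
    have h3 := hsm xh yh
    have hsq : ‖xh - yh‖^2 ≤ 0 := by nlinarith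
    have h5 : ‖xh - yh‖ = 0 := by
      have := le_antisymm hsq (sq_nonneg _)
      exact pow_eq_zero_iff two_ne_zero |>.mp this
    exact sub_eq_zero.mp (norm_eq_zero.mp h5)
  -- Lipschitz constant for M, bounded below appropriately
  set L : ℝ := max L_M (c + 1) with hLdef
  have hL : 0 < L := lt_of_lt_of_le (by linarith) (le_max_right _ _)
  have hLlip : ∀ x y : H, ‖M x - M y‖ ≤ L * ‖x - y‖ := fun x y =>
    le_trans (hMlip x y) (mul_le_mul_of_nonneg_right (le_max_left _ _) (norm_nonneg _))
  have hcL : c < L := lt_of_lt_of_le (by linarith) (le_max_right _ _)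
  -- the resolvent of γ A
  set γ : ℝ := c / L^2 with hγdef
  have hγ : 0 < γ := by positivity
  have hγL : γ * L^2 = c := by rw [hγdef]; field_simp
  choose J u hJmem hJeq using fun z => minty_resolvent A hA x0 (-C x0) hx0 γ hγ z
  -- J is nonexpansive
  have hJne : ∀ z w : H, ‖J z - J w‖ ≤ ‖z - w‖ := by
    intro z w
    have hm := hA.1 (hJmem z) (hJmem w)
    have e : z - w = (J z - J w) + γ • (u z - u w) := by
      conv_lhs => rw [hJeq z, hJeq w]
      rw [smul_sub]; abel
    have hcs := real_inner_le_norm (z - w) (J z - J w)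
    have e2 : ⟪z - w, J z - J w⟫ = ‖J z - J w‖^2 + γ * ⟪u z - u w, J z - J w⟫ := by
      rw [e, inner_add_left, real_inner_smul_left, real_inner_self_eq_norm_sq]
    by_contra hlt
    push_neg at hlt
    nlinarith [mul_nonneg hγ.le hm, norm_nonneg (J z - J w), norm_nonneg (z - w)]
  -- existence of the forward-backward point
  have hex : ∀ x : H, ∃ xhat : H, M x - C x - M xhat ∈ A xhat := by
    intro x
    set q : H := M x - C x with hq
    set Φ : H → H := fun w => J (w - γ • (M w - q)) with hΦ
    set κ : ℝ := Real.sqrt (1 - γ * c) with hκdef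
    have hγc1 : γ * c < 1 := by
      rw [hγdef]
      rw [div_mul_eq_mul_div, div_lt_one (by positivity)]
      nlinarith
    have hγc0 : 0 ≤ 1 - γ * c := by nlinarith
    have hκ0 : 0 ≤ κ := Real.sqrt_nonneg _
    have hκsq : κ^2 = 1 - γ * c := Real.sq_sqrt hγc0
    have hκ1 : κ < 1 := by nlinarith [mul_pos hγ hc]
    have hΦlip : ∀ a b : H, ‖Φ a - Φ b‖ ≤ κ * ‖a - b‖ := by
      intro a b
      have h1 := hJne (a - γ • (M a - q)) (b - γ • (M b - q))
      have e : (a - γ • (M a - q)) - (b - γ • (M b - q)) = (a - b) - γ • (M a - M b) := by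
        simp only [smul_sub]; abel
      rw [e] at h1
      have h2 : ‖(a - b) - γ • (M a - M b)‖^2 ≤ κ^2 * ‖a - b‖^2 := by
        have hn := norm_sub_sq_real (a - b) (γ • (M a - M b))
        rw [real_inner_smul_right, norm_smul, Real.norm_eq_abs, abs_of_pos hγ] at hn
        have hsm' := hsm a b
        have hlip' := hLlip a b
        have hinner : ⟪a - b, M a - M b⟫ = ⟪M a - M b, a - b⟫ := real_inner_comm _ _
        have hMn : ‖M a - M b‖^2 ≤ L^2 * ‖a - b‖^2 := by
          nlinarith [norm_nonneg (M a - M b), norm_nonneg (a - b)]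
        rw [hκsq]
        nlinarith [mul_le_mul_of_nonneg_left hsm' hγ.le,
          mul_le_mul_of_nonneg_left hMn (sq_nonneg γ), sq_nonneg γ, hγL,
          mul_pos hγ hγ]
      have hd0 : 0 ≤ ‖(a - b) - γ • (M a - M b)‖ := norm_nonneg _
      have hκn : 0 ≤ κ * ‖a - b‖ := mul_nonneg hκ0 (norm_nonneg _)
      have h3 : ‖(a - b) - γ • (M a - M b)‖ ≤ κ * ‖a - b‖ := by
        by_contra hcon
        push_neg at hcon
        nlinarith
      exact le_trans h1 h3
    have hcontr : ContractingWith κ.toNNReal Φ := by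
      constructor
      · rw [← Real.toNNReal_one]
        exact (Real.toNNReal_lt_toNNReal_iff one_pos).mpr hκ1
      · apply LipschitzWith.of_dist_le_mul
        intro a b
        rw [dist_eq_norm, dist_eq_norm, Real.coe_toNNReal κ hκ0]
        exact hΦlip a b
    obtain ⟨w, hw, -, -⟩ := hcontr.exists_fixedPoint x0 (edist_ne_top _ _)
    refine ⟨w, ?_⟩
    have hJz : J (w - γ • (M w - q)) = w := hw
    have heq := hJeq (w - γ • (M w - q))
    rw [hJz] at heq
    -- heq : w - γ • (M w - q) = w + γ • u (w - γ • (M w - q))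
    have h2 : γ • u (w - γ • (M w - q)) = γ • (q - M w) := by
      have h3 : w + γ • u (w - γ • (M w - q)) = w + γ • (q - M w) := by
        rw [← heq]; simp only [smul_sub]; abel
      exact add_left_cancel h3
    have h4 : u (w - γ • (M w - q)) = q - M w :=
      smul_right_injective H (ne_of_gt hγ) h2
    have h5 := hJmem (w - γ • (M w - q))
    rw [hJz, h4] at h5
    rw [hq] at h5
    exact h5
  -- Lipschitz continuity of C
  set K0 : ℝ := max ‖P‖ 1 with hK0def
  have hK0 : 0 < K0 := lt_of_lt_of_le one_pos (le_max_right _ _)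
  have hPinvP : ∀ w : H, P (Pinv w) = w := by
    intro w
    have := ContinuousLinearMap.ext_iff.mp hPinv₁ w
    simpa using this
  have hinnerPinv : ∀ w : H, ⟪w, Pinv w⟫ = ⟪Pinv w, P (Pinv w)⟫ := by
    intro w
    conv_rhs => rw [hPinvP w]
    exact real_inner_comm _ _
  have hinnerPinv0 : ∀ w : H, 0 ≤ ⟪w, Pinv w⟫ := by
    intro w
    rw [hinnerPinv w]
    exact le_trans (by positivity) (hcP (Pinv w))
  have hPinvlb : ∀ w : H, c * ‖w‖^2 ≤ K0^2 * ⟪w, Pinv w⟫ := by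
    intro w
    have ht := hcP (Pinv w)
    have hnw : ‖w‖ ≤ K0 * ‖Pinv w‖ := by
      calc ‖w‖ = ‖P (Pinv w)‖ := by rw [hPinvP w]
        _ ≤ ‖P‖ * ‖Pinv w‖ := P.le_opNorm _
        _ ≤ K0 * ‖Pinv w‖ := mul_le_mul_of_nonneg_right (le_max_left _ _) (norm_nonneg _)
    rw [hinnerPinv w]
    have hnw2 : ‖w‖^2 ≤ K0^2 * ‖Pinv w‖^2 := by
      nlinarith [norm_nonneg w, norm_nonneg (Pinv w), mul_self_le_mul_self (norm_nonneg w) hnw]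
    nlinarith [mul_le_mul_of_nonneg_left ht (sq_nonneg K0),
      mul_le_mul_of_nonneg_left hnw2 hc.le]
  set L_C : ℝ := β * K0^2 / c with hLCdef
  have hLC0 : 0 ≤ L_C := by positivity
  have hClip : ∀ x y : H, ‖C x - C y‖ ≤ L_C * ‖x - y‖ := by
    intro x y
    rcases eq_or_lt_of_le hβ0 with hβ | hβ
    · rw [hC0 hβ.symm x y, sub_self, norm_zero]
      positivity
    · have h := hCpos hβ x y
      have hsq : pnorm Pinv (C x - C y) ^2 = ⟪C x - C y, Pinv (C x - C y)⟫ :=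
        Real.sq_sqrt (hinnerPinv0 _)
      rw [hsq] at h
      have hcs := real_inner_le_norm (C x - C y) (x - y)
      have hlb := hPinvlb (C x - C y)
      have hI : ⟪C x - C y, Pinv (C x - C y)⟫ ≤ β * (‖C x - C y‖ * ‖x - y‖) := by
        have h3 : 1/β * ⟪C x - C y, Pinv (C x - C y)⟫ ≤ ‖C x - C y‖ * ‖x - y‖ :=
          le_trans h hcs
        have h4 := mul_le_mul_of_nonneg_left h3 hβ.le
        rw [← mul_assoc, mul_one_div, div_self (ne_of_gt hβ), one_mul] at h4
        exact h4
      rcases eq_or_lt_of_le (norm_nonneg (C x - C y)) with hw0 | hw0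
      · rw [← hw0]
        positivity
      · rw [hLCdef, div_mul_eq_mul_div, le_div_iff₀ hc]
        have hmul : (‖C x - C y‖ * c) * ‖C x - C y‖ ≤ (β * K0^2 * ‖x - y‖) * ‖C x - C y‖ := by
          nlinarith [sq_nonneg K0]
        exact le_of_mul_le_mul_right hmul hw0
  -- assemble
  refine ⟨fun x => ?_, ⟨(L + L_C)/c, div_nonneg (by linarith) hc.le, ?_⟩⟩
  · obtain ⟨xh, hxh⟩ := hex x
    exact ⟨xh, hxh, fun y hy => huniq x y xh hy hxh⟩
  · intro x y xh yh h1 h2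
    have hm := hA.1 h1 h2
    have e : (M x - C x - M xh) - (M y - C y - M yh)
        = ((M x - M y) - (C x - C y)) - (M xh - M yh) := by abel
    rw [e, inner_sub_left] at hm
    have hcs := real_inner_le_norm ((M x - M y) - (C x - C y)) (xh - yh)
    have htri : ‖(M x - M y) - (C x - C y)‖ ≤ L*‖x-y‖ + L_C*‖x-y‖ :=
      le_trans (norm_sub_le _ _) (add_le_add (hLlip x y) (hClip x y))
    have hsm' := hsm xh yh
    rcases eq_or_lt_of_le (norm_nonneg (xh - yh)) with hd | hd
    · rw [← hd]
      positivity
    · rw [div_mul_eq_mul_div, le_div_iff₀ hc]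
      have hmul : (‖xh - yh‖ * c) * ‖xh - yh‖ ≤ ((L + L_C) * ‖x - y‖) * ‖xh - yh‖ := by
        nlinarith [mul_le_mul_of_nonneg_right htri (norm_nonneg (xh - yh))]
      exact le_of_mul_le_mul_right hmul hd
end

section
/- Suppose Assumptions 1 and 2 hold, let T_FB be the nonlinear forward-backward map (T_FB x is the unique x̂ with Mx − Cx − Mx̂ ∈ A x̂), and for x ∈ H define the affine function ψ_x(z) := ⟨Mx − M(T_FB x), z − T_FB x⟩ − (β/4)‖x − T_FB x‖_P². Then: (i) ψ_x(x) ≥ (1 − β/4)‖x − T_FB x‖_P² ≥ 0 for all x ∈ H; (ii) ψ_x(x) = 0 if and only if −Cx ∈ Ax; (iii) ψ_x(z) ≤ 0 for every z ∈ zer(A + C) and every x ∈ H. -/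
/-- separation properties of
`ψ_x(z) := ⟨Mx − M(T_FB x), z − T_FB x⟩ − (β/4)‖x − T_FB x‖_P²`. -/
theorem separating_hyperplane_properties
    {H : Type*} [NormedAddCommGroup H] [InnerProductSpace ℝ H] [CompleteSpace H]
    (P Pinv : H →L[ℝ] H)
    (hPsa : IsSelfAdjoint P)
    (hPpos : ∃ c > 0, ∀ x : H, c * ‖x‖ ^ 2 ≤ inner ℝ x (P x))
    (hPinv₁ : P.comp Pinv = ContinuousLinearMap.id ℝ H)
    (hPinv₂ : Pinv.comp P = ContinuousLinearMap.id ℝ H)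
    -- Assumption 1
    (A : H → Set H) (hA : IsMaxMonotoneOp A)
    (β : ℝ) (hβ0 : 0 ≤ β) (hβ4 : β < 4)
    (C : H → H)
    (hC0 : β = 0 → ∀ x y : H, C x = C y)
    (hCpos : 0 < β → ∀ x y : H,
      (1 / β) * pnorm Pinv (C x - C y) ^ 2 ≤ inner ℝ (C x - C y) (x - y))
    (hzer : ∃ x : H, -C x ∈ A x)
    -- Assumption 2
    (M : H → H) (L_M : ℝ)
    (hMsm : ∀ x y : H, pnorm P (x - y) ^ 2 ≤ inner ℝ (M x - M y) (x - y))
    (hMlip : ∀ x y : H, ‖M x - M y‖ ≤ L_M * ‖x - y‖)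
    -- T_FB
    (T : H → H)
    (hT : ∀ x : H, M x - C x - M (T x) ∈ A (T x))
    (hTuniq : ∀ x xhat : H, M x - C x - M xhat ∈ A xhat → xhat = T x)
    -- the affine separating function
    (ψ : H → H → ℝ)
    (hψ : ∀ x z : H, ψ x z =
      inner ℝ (M x - M (T x)) (z - T x) - β / 4 * pnorm P (x - T x) ^ 2) :
    (∀ x : H, (1 - β / 4) * pnorm P (x - T x) ^ 2 ≤ ψ x x ∧ 0 ≤ ψ x x) ∧
    (∀ x : H, ψ x x = 0 ↔ -C x ∈ A x) ∧
    (∀ x z : H, -C z ∈ A z → ψ x z ≤ 0) := by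

  classical
  obtain ⟨c, hc, hcP⟩ := hPpos
  have hsym : ∀ u v : H, (inner ℝ (P u) v : ℝ) = inner ℝ u (P v) :=
    (ContinuousLinearMap.isSelfAdjoint_iff_isSymmetric.mp hPsa)
  have hPnn : ∀ v : H, (0:ℝ) ≤ inner ℝ v (P v) := by
    intro v
    have h1 := hcP v
    have h2 : (0:ℝ) ≤ c * ‖v‖ ^ 2 := by positivity
    linarith
  have hpsq : ∀ v : H, pnorm P v ^ 2 = inner ℝ v (P v) := by
    intro v; exact Real.sq_sqrt (hPnn v)
  have hPP : ∀ u : H, P (Pinv u) = u := by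
    intro u
    have := ContinuousLinearMap.ext_iff.mp hPinv₁ u
    simpa using this
  have hPinvnn : ∀ u : H, (0:ℝ) ≤ inner ℝ u (Pinv u) := by
    intro u
    have h1 := hPnn (Pinv u)
    rw [hPP] at h1
    rwa [real_inner_comm] at h1
  have hpinvsq : ∀ u : H, pnorm Pinv u ^ 2 = inner ℝ u (Pinv u) := by
    intro u; exact Real.sq_sqrt (hPinvnn u)
  have hvzero : ∀ v : H, (inner ℝ v (P v) : ℝ) = 0 → v = 0 := by
    intro v hv
    have h1 := hcP v
    rw [hv] at h1
    have h2 : ‖v‖ ^ 2 ≤ 0 := by nlinarith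
    have h3 : ‖v‖ ^ 2 = 0 := le_antisymm h2 (sq_nonneg _)
    have h4 : ‖v‖ = 0 := by
      exact pow_eq_zero_iff two_ne_zero |>.mp h3
    exact norm_eq_zero.mp h4
  -- part (i)
  have part1 : ∀ x : H, (1 - β / 4) * pnorm P (x - T x) ^ 2 ≤ ψ x x := by
    intro x
    rw [hψ]
    have h1 := hMsm x (T x)
    linarith
  have part1' : ∀ x : H, 0 ≤ ψ x x := by
    intro x
    have h1 := part1 x
    have h2 : (0:ℝ) ≤ pnorm P (x - T x) ^ 2 := sq_nonneg _
    nlinarith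
  -- x = T x everything
  have hfix : ∀ x : H, ψ x x = 0 → x = T x := by
    intro x h0
    have h1 := part1 x
    rw [h0] at h1
    have h2 : (0:ℝ) ≤ pnorm P (x - T x) ^ 2 := sq_nonneg _
    have h3 : pnorm P (x - T x) ^ 2 = 0 := by nlinarith
    rw [hpsq] at h3
    have := hvzero _ h3
    have : x - T x = 0 := this
    linear_combination (norm := abel) this
  -- Young-type inequality
  have young : ∀ u w : H, β * inner ℝ u w ≤ inner ℝ u (Pinv u) + β ^ 2 / 4 * inner ℝ w (P w) := by
    intro u w
    have h0 := hPnn (Pinv u - (β / 2) • w)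
    have e1 : P (Pinv u - (β / 2) • w) = u - (β / 2) • P w := by
      simp [map_sub, map_smul, hPP]
    rw [e1] at h0
    simp only [inner_sub_left, inner_sub_right, real_inner_smul_left,
      real_inner_smul_right] at h0
    have e2 : (inner ℝ (Pinv u) (P w) : ℝ) = inner ℝ u w := by
      rw [← hsym, hPP]
    have e3 : (inner ℝ w u : ℝ) = inner ℝ u w := real_inner_comm _ _
    have e4 : (inner ℝ (Pinv u) u : ℝ) = inner ℝ u (Pinv u) := real_inner_comm _ _
    rw [e2, e3, e4] at h0
    nlinarith [h0]
  constructor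
  · intro x; exact ⟨part1 x, part1' x⟩
  constructor
  · intro x
    constructor
    · intro h0
      have hx := hfix x h0
      have := hT x
      rw [← hx] at this
      have e : M x - C x - M x = -C x := by abel
      rwa [e] at this
    · intro hmem
      have hmem' : M x - C x - M x ∈ A x := by
        have e : M x - C x - M x = -C x := by abel
        rw [e]; exact hmem
      have hx := hTuniq x x hmem'
      rw [hψ, ← hx]
      have e1 : x - x = (0:H) := sub_self x
      rw [e1]
      simp [pnorm]
  · intro x z hz
    have hmono := hA.1 (hT x) hz
    have e : (M x - C x - M (T x)) - (-C z) = (M x - M (T x)) - (C x - C z) := by abel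
    rw [e, inner_sub_left] at hmono
    -- hmono : 0 ≤ ⟨Mx - MTx, Tx - z⟩ - ⟨Cx - Cz, Tx - z⟩
    rw [hψ]
    have key : (inner ℝ (C x - C z) (z - T x) : ℝ) ≤ β / 4 * pnorm P (x - T x) ^ 2 := by
      rcases eq_or_lt_of_le hβ0 with hb | hb
      · have hCeq : C x = C z := hC0 hb.symm x z
        rw [hCeq, sub_self, inner_zero_left, ← hb]
        have := sq_nonneg (pnorm P (x - T x))
        nlinarith
      · have hco := hCpos hb x z
        rw [hpinvsq] at hco
        have hy := young (C x - C z) (x - T x)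
        rw [one_div] at hco
        have hco' : (inner ℝ (C x - C z) (Pinv (C x - C z)) : ℝ) ≤
            β * inner ℝ (C x - C z) (x - z) := (inv_mul_le_iff₀ hb).mp hco
        have e5 : z - T x = (x - T x) - (x - z) := by abel
        rw [e5, inner_sub_right, hpsq]
        have goal' : β * ((inner ℝ (C x - C z) (x - T x) : ℝ) -
            inner ℝ (C x - C z) (x - z)) ≤
            β * (β / 4 * inner ℝ (x - T x) (P (x - T x))) := by nlinarith [hy, hco']
        exact (mul_le_mul_iff_right₀ hb).mp goal'
    have hmono' : (inner ℝ (M x - M (T x)) (z - T x) : ℝ) ≤ inner ℝ (C x - C z) (z - T x) := by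
      have e6 : z - T x = -(T x - z) := by abel
      rw [e6, inner_neg_right, inner_neg_right]
      linarith
    linarith
end

section
/- Suppose Assumption 1 holds, that each kernel M_k : H → H (k ∈ ℕ) is 1-strongly monotone w.r.t. ‖·‖_P and L_M-Lipschitz continuous w.r.t. ‖·‖ (same P and L_M for all k), and let S be a bounded self-adjoint strongly positive linear operator on H. Let (x_k)_{k∈ℕ} and (x̂_k)_{k∈ℕ} be sequences in H satisfying M_k x_k − C x_k − M_k x̂_k ∈ A x̂_k for every k, such that (i) ‖x_k − z‖_S converges (as a real sequence) for every z ∈ zer(A + C), and (ii) ‖x_k − x̂_k‖_S → 0. Then x_k converges weakly to some x̄ ∈ zer(A + C). -/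
open Filter Topology

/-- Weak convergence of a sequence in a Hilbert space. -/
def WeakConvergesTo {H : Type*} [NormedAddCommGroup H] [InnerProductSpace ℝ H]
    (x : ℕ → H) (xbar : H) : Prop :=
  ∀ y : H, Tendsto (fun k => (inner ℝ (x k) y : ℝ)) atTop (nhds (inner ℝ xbar y))

section Aux

lemma pnorm_sq_eq {H : Type*} [NormedAddCommGroup H] [InnerProductSpace ℝ H]
    (S : H →L[ℝ] H) {c : ℝ} (hc : 0 < c) (h : ∀ x : H, c * ‖x‖ ^ 2 ≤ inner ℝ x (S x))
    (v : H) : pnorm S v ^ 2 = inner ℝ v (S v) :=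
  Real.sq_sqrt (le_trans (by positivity) (h v))

lemma le_pnorm {H : Type*} [NormedAddCommGroup H] [InnerProductSpace ℝ H]
    (S : H →L[ℝ] H) {c : ℝ} (hc : 0 < c) (h : ∀ x : H, c * ‖x‖ ^ 2 ≤ inner ℝ x (S x))
    (v : H) : Real.sqrt c * ‖v‖ ≤ pnorm S v := by
  have h1 : Real.sqrt (c * ‖v‖ ^ 2) ≤ pnorm S v := Real.sqrt_le_sqrt (h v)
  rwa [Real.sqrt_mul hc.le, Real.sqrt_sq (norm_nonneg _)] at h1

lemma tendsto_inner_strong_weak {H : Type*} [NormedAddCommGroup H] [InnerProductSpace ℝ H]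
    (a b : ℕ → H) (abar bbar : H) (Bb : ℝ) (hb : ∀ k, ‖b k‖ ≤ Bb)
    (ha : Tendsto (fun k => ‖a k - abar‖) atTop (nhds 0))
    (hbw : ∀ y : H, Tendsto (fun k => (inner ℝ (b k) y : ℝ)) atTop (nhds (inner ℝ bbar y))) :
    Tendsto (fun k => (inner ℝ (a k) (b k) : ℝ)) atTop (nhds (inner ℝ abar bbar)) := by
  have h1 : Tendsto (fun k => (inner ℝ (a k - abar) (b k) : ℝ)) atTop (nhds 0) := by
    refine squeeze_zero_norm (fun k => ?_) (by simpa using ha.mul_const Bb)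
    exact le_trans (abs_real_inner_le_norm _ _)
      (mul_le_mul_of_nonneg_left (hb k) (norm_nonneg _))
  have h2 : Tendsto (fun k => (inner ℝ abar (b k) : ℝ)) atTop (nhds (inner ℝ abar bbar)) := by
    have h3 := hbw abar
    have h4 : ∀ k, (inner ℝ (b k) abar : ℝ) = inner ℝ abar (b k) := fun k => real_inner_comm _ _
    rw [show (inner ℝ abar bbar : ℝ) = inner ℝ bbar abar from real_inner_comm _ _]
    exact Tendsto.congr h4 h3
  have h5 := h1.add h2
  rw [zero_add] at h5
  refine Tendsto.congr (fun k => ?_) h5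
  rw [inner_sub_left]; ring

lemma exists_weak_subseq {H : Type*} [NormedAddCommGroup H] [InnerProductSpace ℝ H]
    [CompleteSpace H] (x : ℕ → H) (B : ℝ) (hB : ∀ k, ‖x k‖ ≤ B) :
    ∃ (p : H) (φ : ℕ → ℕ), StrictMono φ ∧
      ∀ y : H, Tendsto (fun k => (inner ℝ (x (φ k)) y : ℝ)) atTop (nhds (inner ℝ p y)) := by
  have hB0 : 0 ≤ B := le_trans (norm_nonneg _) (hB 0)
  have hbnd : ∀ k (y : H), |(inner ℝ (x k) y : ℝ)| ≤ B * ‖y‖ := by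
    intro k y
    refine le_trans (abs_real_inner_le_norm _ _) ?_
    exact mul_le_mul_of_nonneg_right (hB k) (norm_nonneg _)
  have humem : ∀ k, (fun n => (inner ℝ (x k) (x n) : ℝ)) ∈
      Set.pi Set.univ (fun _ : ℕ => Set.Icc (-(B*B)) (B*B)) := by
    intro k n _
    have h1 : |(inner ℝ (x k) (x n) : ℝ)| ≤ B * B := by
      refine le_trans (abs_real_inner_le_norm _ _) ?_
      exact mul_le_mul (hB k) (hB n) (norm_nonneg _) hB0
    exact Set.mem_Icc.mpr (abs_le.mp h1)
  obtain ⟨a, -, φ, hφ, hconv⟩ :=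
    (isCompact_univ_pi (fun _ : ℕ => isCompact_Icc)).tendsto_subseq humem
  have hconv' : ∀ n, Tendsto (fun k => (inner ℝ (x (φ k)) (x n) : ℝ)) atTop (nhds (a n)) :=
    fun n => tendsto_pi_nhds.mp hconv n
  set V := (Submodule.span ℝ (Set.range x)).topologicalClosure with hVdef
  have hVclosed : IsClosed (V : Set H) := Submodule.isClosed_topologicalClosure _
  haveI : CompleteSpace V := hVclosed.completeSpace_coe
  have hG : ∀ y ∈ Submodule.span ℝ (Set.range x),
      ∃ L : ℝ, Tendsto (fun k => (inner ℝ (x (φ k)) y : ℝ)) atTop (nhds L) := by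
    intro y hy
    induction hy using Submodule.span_induction with
    | mem y hy => obtain ⟨n, rfl⟩ := hy; exact ⟨a n, hconv' n⟩
    | zero => exact ⟨0, by simp⟩
    | add y z hy hz ihy ihz =>
        obtain ⟨L1, h1⟩ := ihy; obtain ⟨L2, h2⟩ := ihz
        exact ⟨L1 + L2, by simpa [inner_add_right] using h1.add h2⟩
    | smul c y hy ih =>
        obtain ⟨L, h⟩ := ih
        exact ⟨c * L, by simpa [real_inner_smul_right] using h.const_mul c⟩
  have hcau : ∀ y : H, y ∈ V → CauchySeq (fun k => (inner ℝ (x (φ k)) y : ℝ)) := by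
    intro y hyV
    rw [Metric.cauchySeq_iff]
    intro ε hε
    have hδ : 0 < ε / 3 / (B + 1) := by positivity
    have hyc : y ∈ closure ((Submodule.span ℝ (Set.range x) : Submodule ℝ H) : Set H) := by
      rw [← Submodule.topologicalClosure_coe]; exact hyV
    obtain ⟨y', hy'mem, hy'close⟩ := Metric.mem_closure_iff.mp hyc _ hδ
    obtain ⟨L, hL⟩ := hG y' hy'mem
    obtain ⟨N, hN⟩ := Metric.cauchySeq_iff.mp hL.cauchySeq (ε/3) (by positivity)
    refine ⟨N, fun m hm n hn => ?_⟩
    have hclose : ∀ k, |(inner ℝ (x (φ k)) y : ℝ) - inner ℝ (x (φ k)) y'| ≤ ε / 3 := by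
      intro k
      rw [← inner_sub_right]
      refine le_trans (hbnd _ _) ?_
      have h1 : ‖y - y'‖ < ε / 3 / (B + 1) := by rwa [← dist_eq_norm]
      have h2 : B * ‖y - y'‖ ≤ (B + 1) * (ε / 3 / (B + 1)) := by
        apply mul_le_mul (by linarith) h1.le (norm_nonneg _) (by linarith)
      calc B * ‖y - y'‖ ≤ (B + 1) * (ε / 3 / (B + 1)) := h2
        _ = ε / 3 := by field_simp
    have h3 := hN m hm n hn
    rw [Real.dist_eq] at h3 ⊢
    have c1 := hclose m; have c2 := hclose n
    have h6 : |(inner ℝ (x (φ m)) y : ℝ) - inner ℝ (x (φ n)) y| ≤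
        |(inner ℝ (x (φ m)) y : ℝ) - inner ℝ (x (φ m)) y'| +
        |(inner ℝ (x (φ m)) y' : ℝ) - inner ℝ (x (φ n)) y'| +
        |(inner ℝ (x (φ n)) y' : ℝ) - inner ℝ (x (φ n)) y| := by
      calc |(inner ℝ (x (φ m)) y : ℝ) - inner ℝ (x (φ n)) y|
          ≤ |(inner ℝ (x (φ m)) y : ℝ) - inner ℝ (x (φ m)) y'| +
            |(inner ℝ (x (φ m)) y' : ℝ) - inner ℝ (x (φ n)) y| := abs_sub_le _ _ _
        _ ≤ _ := by
            have h4 := abs_sub_le ((inner ℝ (x (φ m)) y' : ℝ)) (inner ℝ (x (φ n)) y' : ℝ)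
              (inner ℝ (x (φ n)) y : ℝ)
            linarith
    have c3 : |(inner ℝ (x (φ n)) y' : ℝ) - inner ℝ (x (φ n)) y| =
        |(inner ℝ (x (φ n)) y : ℝ) - inner ℝ (x (φ n)) y'| := abs_sub_comm _ _
    rw [c3] at h6
    linarith
  have hx_mem : ∀ k, x k ∈ V :=
    fun k => Submodule.le_topologicalClosure _ (Submodule.subset_span ⟨k, rfl⟩)
  have hall : ∀ y : H, ∃ L : ℝ, Tendsto (fun k => (inner ℝ (x (φ k)) y : ℝ)) atTop (nhds L) := by
    intro y
    have h1 : (y - (V.orthogonalProjection y : H)) ∈ Vᗮ :=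
      V.sub_starProjection_mem_orthogonal y
    obtain ⟨L, hL⟩ := cauchySeq_tendsto_of_complete (hcau _ (V.orthogonalProjection y).2)
    refine ⟨L, Tendsto.congr (fun k => ?_) hL⟩
    have hz : (inner ℝ (x (φ k)) (y - (V.orthogonalProjection y : H)) : ℝ) = 0 :=
      (Submodule.mem_orthogonal V _).mp h1 _ (hx_mem (φ k))
    rw [inner_sub_right] at hz
    linarith
  choose L hL using hall
  have hadd : ∀ y z, L (y + z) = L y + L z := fun y z =>
    tendsto_nhds_unique (hL (y + z)) (by simpa [inner_add_right] using (hL y).add (hL z))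
  have hsmul : ∀ (c : ℝ) y, L (c • y) = c * L y := fun c y =>
    tendsto_nhds_unique (hL (c • y)) (by simpa [real_inner_smul_right] using (hL y).const_mul c)
  have hLbnd : ∀ y, ‖L y‖ ≤ B * ‖y‖ := by
    intro y
    rw [Real.norm_eq_abs, abs_le]
    constructor
    · exact ge_of_tendsto (hL y) (Eventually.of_forall fun k => neg_le_of_abs_le (hbnd _ _))
    · exact le_of_tendsto (hL y) (Eventually.of_forall fun k => le_of_abs_le (hbnd _ _))
  let F : H →L[ℝ] ℝ := LinearMap.mkContinuous
    { toFun := L, map_add' := hadd, map_smul' := by intro c y; simpa using hsmul c y } B hLbnd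
  refine ⟨(InnerProductSpace.toDual ℝ H).symm F, φ, hφ, fun y => ?_⟩
  have hp : (inner ℝ ((InnerProductSpace.toDual ℝ H).symm F) y : ℝ) = F y := by
    rw [← InnerProductSpace.toDual_apply_apply]; simp
  rw [hp]
  exact hL y

end Aux
set_option maxHeartbeats 2000000 in
/-- sequences with converging `S`-distances to the solution set and with
vanishing forward-backward residual converge weakly to a zero of `A + C`. -/
theorem nofob_abstract_weak_convergence
    {H : Type*} [NormedAddCommGroup H] [InnerProductSpace ℝ H] [CompleteSpace H]
    (P Pinv S : H →L[ℝ] H)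
    (hPsa : IsSelfAdjoint P)
    (hPpos : ∃ c > 0, ∀ x : H, c * ‖x‖ ^ 2 ≤ inner ℝ x (P x))
    (hPinv₁ : P.comp Pinv = ContinuousLinearMap.id ℝ H)
    (hPinv₂ : Pinv.comp P = ContinuousLinearMap.id ℝ H)
    (hSsa : IsSelfAdjoint S)
    (hSpos : ∃ c > 0, ∀ x : H, c * ‖x‖ ^ 2 ≤ inner ℝ x (S x))
    -- Assumption 1
    (A : H → Set H) (hA : IsMaxMonotoneOp A)
    (β : ℝ) (hβ0 : 0 ≤ β) (hβ4 : β < 4)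
    (C : H → H)
    (hC0 : β = 0 → ∀ x y : H, C x = C y)
    (hCpos : 0 < β → ∀ x y : H,
      (1 / β) * pnorm Pinv (C x - C y) ^ 2 ≤ inner ℝ (C x - C y) (x - y))
    (hzer : ∃ x : H, -C x ∈ A x)
    -- kernels M_k
    (M : ℕ → H → H) (L_M : ℝ)
    (hMsm : ∀ k, ∀ x y : H, pnorm P (x - y) ^ 2 ≤ inner ℝ (M k x - M k y) (x - y))
    (hMlip : ∀ k, ∀ x y : H, ‖M k x - M k y‖ ≤ L_M * ‖x - y‖)
    -- the sequences
    (x xh : ℕ → H)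
    (hxh : ∀ k, M k (x k) - C (x k) - M k (xh k) ∈ A (xh k))
    (hFejer : ∀ z : H, -C z ∈ A z →
      ∃ l : ℝ, Tendsto (fun k => pnorm S (x k - z)) atTop (nhds l))
    (hres : Tendsto (fun k => pnorm S (x k - xh k)) atTop (nhds 0)) :
    ∃ xbar : H, -C xbar ∈ A xbar ∧ WeakConvergesTo x xbar := by
  classical
  obtain ⟨z0, hz0⟩ := hzer
  rcases subsingleton_or_nontrivial H with hsub | hnt
  · refine ⟨z0, hz0, fun y => ?_⟩
    have he : ∀ k, x k = z0 := fun k => Subsingleton.elim _ _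
    simp only [he]
    exact tendsto_const_nhds
  obtain ⟨cS, hcS, hSlb⟩ := hSpos
  obtain ⟨cP, hcP, hPlb⟩ := hPpos
  have hsqcS : 0 < Real.sqrt cS := Real.sqrt_pos.mpr hcS
  have hSlow : ∀ v : H, ‖v‖ ≤ pnorm S v / Real.sqrt cS := by
    intro v
    rw [le_div_iff₀ hsqcS]
    calc ‖v‖ * Real.sqrt cS = Real.sqrt cS * ‖v‖ := by ring
      _ ≤ _ := le_pnorm S hcS hSlb v
  have hresn : Tendsto (fun k => ‖x k - xh k‖) atTop (nhds 0) := by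
    refine squeeze_zero (fun k => norm_nonneg _) (fun k => hSlow _) ?_
    simpa using hres.div_const (Real.sqrt cS)
  -- boundedness
  obtain ⟨l0, hl0⟩ := hFejer z0 hz0
  obtain ⟨b0, hb0⟩ := hl0.bddAbove_range
  have hb0' : ∀ k, pnorm S (x k - z0) ≤ b0 := fun k => hb0 (Set.mem_range_self k)
  set Bx : ℝ := b0 / Real.sqrt cS + ‖z0‖ with hBxdef
  have hxbd : ∀ k, ‖x k‖ ≤ Bx := by
    intro k
    have h1 : ‖x k - z0‖ ≤ b0 / Real.sqrt cS :=
      le_trans (hSlow _) (by gcongr; exact hb0' k)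
    have h2 := norm_add_le (x k - z0) z0
    rw [sub_add_cancel] at h2
    rw [hBxdef]; linarith
  obtain ⟨b1, hb1⟩ := hresn.bddAbove_range
  have hb1' : ∀ k, ‖x k - xh k‖ ≤ b1 := fun k => hb1 (Set.mem_range_self k)
  set Bxh : ℝ := Bx + b1 with hBxhdef
  have hxhbd : ∀ k, ‖xh k‖ ≤ Bxh := by
    intro k
    have h2 := norm_sub_le (x k) (x k - xh k)
    have h3 : x k - (x k - xh k) = xh k := by abel
    rw [h3] at h2
    rw [hBxhdef]; linarith [hxbd k, hb1' k]
  -- P⁻¹ is strongly positive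
  have hPPinv : ∀ v : H, P (Pinv v) = v := by
    intro v
    have := congrArg (fun (T : H →L[ℝ] H) => T v) hPinv₁
    simpa using this
  have hP0 : P ≠ 0 := by
    intro h0
    obtain ⟨v, hv⟩ := exists_ne (0 : H)
    have := hPPinv v
    rw [h0] at this
    simp at this
    exact hv this.symm
  have hPnorm : 0 < ‖P‖ := norm_pos_iff.mpr hP0
  set cI : ℝ := cP / ‖P‖ ^ 2 with hcIdef
  have hcIpos : 0 < cI := by rw [hcIdef]; positivity
  have hPinvlb : ∀ d : H, cI * ‖d‖ ^ 2 ≤ inner ℝ d (Pinv d) := by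
    intro d
    have hPe : P (Pinv d) = d := hPPinv d
    have h1 : cP * ‖Pinv d‖ ^ 2 ≤ inner ℝ (Pinv d) (P (Pinv d)) := hPlb (Pinv d)
    have h2 : (inner ℝ d (Pinv d) : ℝ) = inner ℝ (Pinv d) (P (Pinv d)) := by
      rw [hPe]; exact real_inner_comm _ _
    have h3 : ‖d‖ ≤ ‖P‖ * ‖Pinv d‖ := by
      conv_lhs => rw [← hPe]
      exact P.le_opNorm _
    have h4 : ‖d‖ ^ 2 ≤ ‖P‖ ^ 2 * ‖Pinv d‖ ^ 2 := by nlinarith [norm_nonneg d]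
    calc cI * ‖d‖ ^ 2 ≤ cI * (‖P‖ ^ 2 * ‖Pinv d‖ ^ 2) :=
          mul_le_mul_of_nonneg_left h4 hcIpos.le
      _ = cP * ‖Pinv d‖ ^ 2 := by rw [hcIdef]; field_simp
      _ ≤ inner ℝ (Pinv d) (P (Pinv d)) := h1
      _ = inner ℝ d (Pinv d) := h2.symm
  -- C is Lipschitz and monotone
  set LC : ℝ := β / cI with hLCdef
  have hLC0 : 0 ≤ LC := div_nonneg hβ0 hcIpos.le
  have hClip : ∀ u v : H, ‖C u - C v‖ ≤ LC * ‖u - v‖ := by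
    intro u v
    rcases eq_or_lt_of_le hβ0 with hβ | hβ
    · have hcc := hC0 hβ.symm u v
      rw [hcc, sub_self, norm_zero]
      positivity
    · by_cases hd0 : C u - C v = 0
      · rw [hd0, norm_zero]; positivity
      · have h1 : (1/β) * pnorm Pinv (C u - C v) ^ 2 ≤ inner ℝ (C u - C v) (u - v) :=
          hCpos hβ u v
        have h2 : pnorm Pinv (C u - C v) ^ 2 = inner ℝ (C u - C v) (Pinv (C u - C v)) :=
          pnorm_sq_eq Pinv hcIpos hPinvlb _
        have h3 := hPinvlb (C u - C v)
        have h4 : (inner ℝ (C u - C v) (u - v) : ℝ) ≤ ‖C u - C v‖ * ‖u - v‖ :=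
          real_inner_le_norm _ _
        have h5 : (1/β) * (cI * ‖C u - C v‖ ^ 2) ≤ ‖C u - C v‖ * ‖u - v‖ := by
          calc (1/β) * (cI * ‖C u - C v‖ ^ 2)
              ≤ (1/β) * inner ℝ (C u - C v) (Pinv (C u - C v)) :=
                mul_le_mul_of_nonneg_left h3 (by positivity)
            _ = (1/β) * pnorm Pinv (C u - C v) ^ 2 := by rw [h2]
            _ ≤ inner ℝ (C u - C v) (u - v) := h1
            _ ≤ _ := h4
        have h6 : cI * ‖C u - C v‖ ^ 2 ≤ β * (‖C u - C v‖ * ‖u - v‖) := by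
          have h7 := mul_le_mul_of_nonneg_left h5 hβ.le
          have h8 : β * ((1/β) * (cI * ‖C u - C v‖ ^ 2)) = cI * ‖C u - C v‖ ^ 2 := by
            field_simp
          rwa [h8] at h7
        have hdn : 0 < ‖C u - C v‖ := norm_pos_iff.mpr hd0
        rw [hLCdef, div_mul_eq_mul_div, le_div_iff₀ hcIpos]
        nlinarith [h6, hdn]
  have hCmono : ∀ u v : H, 0 ≤ (inner ℝ (C u - C v) (u - v) : ℝ) := by
    intro u v
    rcases eq_or_lt_of_le hβ0 with hβ | hβ
    · have hcc := hC0 hβ.symm u v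
      simp [hcc]
    · refine le_trans ?_ (hCpos hβ u v)
      positivity
  -- the residual vector
  set w : ℕ → H := fun k => M k (x k) - M k (xh k) with hwdef
  have hwto : Tendsto (fun k => ‖w k‖) atTop (nhds 0) := by
    refine squeeze_zero (fun k => norm_nonneg _) (fun k => hMlip k (x k) (xh k)) ?_
    simpa using hresn.const_mul L_M
  have hu : ∀ k, w k - C (x k) ∈ A (xh k) := by
    intro k
    have h1 := hxh k
    have heq : M k (x k) - C (x k) - M k (xh k) = (M k (x k) - M k (xh k)) - C (x k) := by
      abel
    rw [heq] at h1
    exact h1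
  -- strong convergence of C (x k) to C z0
  have hCconv : Tendsto (fun k => ‖C (x k) - C z0‖) atTop (nhds 0) := by
    rcases eq_or_lt_of_le hβ0 with hβ | hβ
    · have h1 : ∀ k, C (x k) - C z0 = 0 := fun k => sub_eq_zero.mpr (hC0 hβ.symm _ _)
      simp only [h1, norm_zero]
      exact tendsto_const_nhds
    · have hxhz : ∀ k, ‖xh k - z0‖ ≤ Bxh + ‖z0‖ := by
        intro k
        have := norm_sub_le (xh k) z0
        linarith [hxhbd k]
      have hε : Tendsto (fun k => (inner ℝ (w k) (xh k - z0) : ℝ)) atTop (nhds 0) := by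
        refine squeeze_zero_norm (fun k => ?_) (by simpa using hwto.mul_const (Bxh + ‖z0‖))
        exact le_trans (abs_real_inner_le_norm _ _)
          (mul_le_mul_of_nonneg_left (hxhz k) (norm_nonneg _))
      have hak : ∀ k, (inner ℝ (C (x k) - C z0) (xh k - z0) : ℝ) ≤ inner ℝ (w k) (xh k - z0) := by
        intro k
        have h1 := hA.1 (hu k) hz0
        have h2 : (w k - C (x k)) - (-C z0) = w k - (C (x k) - C z0) := by abel
        rw [h2, inner_sub_left] at h1
        linarith
      have hCb : ∀ k, ‖C (x k) - C z0‖ ≤ LC * (Bx + ‖z0‖) := by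
        intro k
        refine le_trans (hClip _ _) (mul_le_mul_of_nonneg_left ?_ hLC0)
        exact le_trans (norm_sub_le _ _) (by linarith [hxbd k])
      have hsq : ∀ k, cI/β * ‖C (x k) - C z0‖ ^ 2 ≤
          inner ℝ (w k) (xh k - z0) + (LC * (Bx + ‖z0‖)) * ‖x k - xh k‖ := by
        intro k
        have h1 := hCpos hβ (x k) z0
        have h2 : pnorm Pinv (C (x k) - C z0) ^ 2 =
            inner ℝ (C (x k) - C z0) (Pinv (C (x k) - C z0)) :=
          pnorm_sq_eq Pinv hcIpos hPinvlb _
        have h3 := hPinvlb (C (x k) - C z0)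
        have h4 : (inner ℝ (C (x k) - C z0) (x k - z0) : ℝ) =
            inner ℝ (C (x k) - C z0) (xh k - z0) + inner ℝ (C (x k) - C z0) (x k - xh k) := by
          rw [← inner_add_right]
          congr 1
          abel
        have h5 : (inner ℝ (C (x k) - C z0) (x k - xh k) : ℝ) ≤
            (LC * (Bx + ‖z0‖)) * ‖x k - xh k‖ := by
          refine le_trans (real_inner_le_norm _ _) ?_
          exact mul_le_mul_of_nonneg_right (hCb k) (norm_nonneg _)
        have h6 : cI/β * ‖C (x k) - C z0‖ ^ 2 ≤ inner ℝ (C (x k) - C z0) (x k - z0) := by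
          calc cI/β * ‖C (x k) - C z0‖ ^ 2
              = (1/β) * (cI * ‖C (x k) - C z0‖ ^ 2) := by ring
            _ ≤ (1/β) * inner ℝ (C (x k) - C z0) (Pinv (C (x k) - C z0)) :=
                mul_le_mul_of_nonneg_left h3 (by positivity)
            _ = (1/β) * pnorm Pinv (C (x k) - C z0) ^ 2 := by rw [h2]
            _ ≤ _ := h1
        have h7 := h6
        rw [h4] at h7
        exact le_trans h7 (add_le_add (hak k) h5)
      have hrhs : Tendsto (fun k => (inner ℝ (w k) (xh k - z0) : ℝ) +
          (LC * (Bx + ‖z0‖)) * ‖x k - xh k‖) atTop (nhds 0) := by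
        have := hε.add (hresn.const_mul (LC * (Bx + ‖z0‖)))
        simpa using this
      have hsqto : Tendsto (fun k => ‖C (x k) - C z0‖ ^ 2) atTop (nhds 0) := by
        refine squeeze_zero (fun k => sq_nonneg _) (fun k => ?_)
          (by simpa using hrhs.const_mul (β/cI))
        have h1 := hsq k
        calc ‖C (x k) - C z0‖ ^ 2
            = (β/cI) * (cI/β * ‖C (x k) - C z0‖ ^ 2) := by field_simp
          _ ≤ (β/cI) * ((inner ℝ (w k) (xh k - z0) : ℝ) +
              (LC * (Bx + ‖z0‖)) * ‖x k - xh k‖) :=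
              mul_le_mul_of_nonneg_left h1 (by positivity)
      have h2 := (Real.continuous_sqrt.tendsto (0:ℝ)).comp hsqto
      rw [Real.sqrt_zero] at h2
      refine Tendsto.congr (fun k => ?_) h2
      exact Real.sqrt_sq (norm_nonneg _)
  have huconv : Tendsto (fun k => ‖(w k - C (x k)) - (-C z0)‖) atTop (nhds 0) := by
    refine squeeze_zero (fun k => norm_nonneg _) (fun k => ?_)
      (by simpa using hwto.add hCconv)
    have h1 : (w k - C (x k)) - (-C z0) = w k - (C (x k) - C z0) := by abel
    rw [h1]
    exact norm_sub_le _ _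
  -- every weak cluster point along a subsequence is a zero of A + C
  have hcluster : ∀ (σ : ℕ → ℕ), Tendsto σ atTop atTop → ∀ p : H,
      (∀ y : H, Tendsto (fun k => (inner ℝ (x (σ k)) y : ℝ)) atTop (nhds (inner ℝ p y))) →
      -C p ∈ A p := by
    intro σ hσ p hp
    have hxhweak : ∀ y : H,
        Tendsto (fun k => (inner ℝ (xh (σ k)) y : ℝ)) atTop (nhds (inner ℝ p y)) := by
      intro y
      have h1 : Tendsto (fun k => (inner ℝ (xh (σ k) - x (σ k)) y : ℝ)) atTop (nhds 0) := by
        refine squeeze_zero_norm (a := fun k => ‖x (σ k) - xh (σ k)‖ * ‖y‖)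
          (fun k => ?_) ?_
        · calc |(inner ℝ (xh (σ k) - x (σ k)) y : ℝ)|
              ≤ ‖xh (σ k) - x (σ k)‖ * ‖y‖ := abs_real_inner_le_norm _ _
            _ = ‖x (σ k) - xh (σ k)‖ * ‖y‖ := by rw [norm_sub_rev]
        · simpa using (hresn.comp hσ).mul_const ‖y‖
      have h2 := (hp y).add h1
      rw [add_zero] at h2
      refine Tendsto.congr (fun k => ?_) h2
      rw [← inner_add_left]
      congr 1
      abel
    have hstep1 : -C z0 ∈ A p := by
      apply hA.2
      intro y v hv
      have hton : Tendsto (fun k =>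
          (inner ℝ ((w (σ k) - C (x (σ k))) - v) (xh (σ k) - y) : ℝ)) atTop
          (nhds (inner ℝ (-C z0 - v) (p - y))) := by
        refine tendsto_inner_strong_weak _ _ _ _ (Bxh + ‖y‖) (fun k => ?_) ?_ ?_
        · exact le_trans (norm_sub_le _ _) (by linarith [hxhbd (σ k)])
        · refine Tendsto.congr (fun k => ?_) (huconv.comp hσ)
          show ‖(w (σ k) - C (x (σ k))) - (-C z0)‖ = _
          congr 1
          abel
        · intro c
          simpa [inner_sub_left] using (hxhweak c).sub_const (inner ℝ y c : ℝ)
      exact ge_of_tendsto' hton (fun k => hA.1 (hu (σ k)) hv)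
    have hCp : C p = C z0 := by
      rcases eq_or_lt_of_le hβ0 with hβ | hβ
      · exact hC0 hβ.symm p z0
      · have hq : ∀ q : H, 0 ≤ (inner ℝ (C z0 - C q) (p - q) : ℝ) := by
          intro q
          have hton : Tendsto (fun k =>
              (inner ℝ (C (x (σ k)) - C q) (x (σ k) - q) : ℝ)) atTop
              (nhds (inner ℝ (C z0 - C q) (p - q))) := by
            refine tendsto_inner_strong_weak _ _ _ _ (Bx + ‖q‖) (fun k => ?_) ?_ ?_
            · exact le_trans (norm_sub_le _ _) (by linarith [hxbd (σ k)])
            · refine Tendsto.congr (fun k => ?_) (hCconv.comp hσ)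
              show ‖C (x (σ k)) - C z0‖ = _
              congr 1
              abel
            · intro c
              simpa [inner_sub_left] using (hp c).sub_const (inner ℝ q c : ℝ)
          exact ge_of_tendsto' hton (fun k => hCmono _ _)
        have hd : ∀ d : H, 0 ≤ (inner ℝ (C z0 - C p) d : ℝ) := by
          intro d
          have ht : ∀ t : ℝ, 0 < t → -(LC * ‖d‖ ^ 2) * t ≤ inner ℝ (C z0 - C p) d := by
            intro t ht0
            have h1 := hq (p - t • d)
            have h2 : p - (p - t • d) = t • d := by abel
            rw [h2, real_inner_smul_right] at h1
            have h3 : (0:ℝ) ≤ inner ℝ (C z0 - C (p - t • d)) d := by nlinarith [h1, ht0]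
            have h4 : (inner ℝ (C z0 - C p) d : ℝ) =
                inner ℝ (C z0 - C (p - t • d)) d + inner ℝ (C (p - t • d) - C p) d := by
              rw [← inner_add_left]
              congr 1
              abel
            have h5 : |(inner ℝ (C (p - t • d) - C p) d : ℝ)| ≤ LC * (t * ‖d‖) * ‖d‖ := by
              refine le_trans (abs_real_inner_le_norm _ _) ?_
              refine mul_le_mul_of_nonneg_right ?_ (norm_nonneg _)
              refine le_trans (hClip _ _) ?_
              have h7 : (p - t • d) - p = -(t • d) := by abel
              rw [h7, norm_neg, norm_smul, Real.norm_eq_abs, abs_of_pos ht0]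
            have h6 := (abs_le.mp h5).1
            have h8 : -(LC * ‖d‖ ^ 2) * t = -(LC * (t * ‖d‖) * ‖d‖) := by ring
            rw [h8, h4]
            linarith
          by_contra hneg
          push_neg at hneg
          have hL2 : 0 ≤ LC * ‖d‖ ^ 2 := by positivity
          rcases eq_or_lt_of_le hL2 with h0 | h0
          · have h1 := ht 1 one_pos
            rw [← h0] at h1
            simp at h1
            linarith
          · have hmI : 0 < -(inner ℝ (C z0 - C p) d : ℝ) := by linarith
            have h1 := ht (-(inner ℝ (C z0 - C p) d : ℝ) / (2 * (LC * ‖d‖ ^ 2)))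
              (div_pos hmI (by positivity))
            have hkey : ∀ a b : ℝ, 0 < a → -a * (-b / (2 * a)) = b / 2 := by
              intro a b ha
              field_simp
            have h2 := hkey (LC * ‖d‖ ^ 2) (inner ℝ (C z0 - C p) d : ℝ) h0
            rw [h2] at h1
            linarith
        have h1 := hd (C p - C z0)
        have h2 : (inner ℝ (C z0 - C p) (C p - C z0) : ℝ) = -‖C p - C z0‖ ^ 2 := by
          rw [show C z0 - C p = -(C p - C z0) from by abel, inner_neg_left,
            real_inner_self_eq_norm_sq]
        rw [h2] at h1
        have h3 : ‖C p - C z0‖ ^ 2 = 0 := le_antisymm (by linarith) (sq_nonneg _)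
        have h4 : ‖C p - C z0‖ = 0 := by
          exact pow_eq_zero_iff (by norm_num) |>.mp h3
        exact sub_eq_zero.mp (norm_eq_zero.mp h4)
    rw [hCp]
    exact hstep1
  -- extract the weak limit
  obtain ⟨xbar, φ, hφ, hφw⟩ := exists_weak_subseq x Bx hxbd
  have hxbarzero : -C xbar ∈ A xbar := hcluster φ hφ.tendsto_atTop xbar hφw
  refine ⟨xbar, hxbarzero, ?_⟩
  intro y
  refine tendsto_of_subseq_tendsto ?_
  intro ns hns
  obtain ⟨p, ψ, hψ, hpw⟩ := exists_weak_subseq (fun n => x (ns n)) Bx (fun n => hxbd _)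
  have hσ : Tendsto (fun n => ns (ψ n)) atTop atTop := hns.comp hψ.tendsto_atTop
  have hpw' : ∀ c : H, Tendsto (fun k => (inner ℝ (x (ns (ψ k))) c : ℝ)) atTop
      (nhds (inner ℝ p c)) := hpw
  have hpzero : -C p ∈ A p := hcluster _ hσ p hpw'
  -- Opial argument: p = xbar
  obtain ⟨l1, hl1⟩ := hFejer xbar hxbarzero
  obtain ⟨l2, hl2⟩ := hFejer p hpzero
  have hSsym := hSsa.isSymmetric
  have hkey : ∀ u : H, pnorm S (u - p) ^ 2 - pnorm S (u - xbar) ^ 2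
      = inner ℝ p (S p) - inner ℝ xbar (S xbar) - 2 * inner ℝ u (S (p - xbar)) := by
    intro u
    rw [pnorm_sq_eq S hcS hSlb, pnorm_sq_eq S hcS hSlb]
    have e1 : ∀ q : H, (inner ℝ (u - q) (S (u - q)) : ℝ) =
        inner ℝ u (S u) - 2 * inner ℝ u (S q) + inner ℝ q (S q) := by
      intro q
      rw [map_sub, inner_sub_left, inner_sub_right, inner_sub_right]
      have hsym : (inner ℝ q (S u) : ℝ) = inner ℝ u (S q) := by
        rw [real_inner_comm]
        simpa using hSsym u q
      rw [hsym]
      ring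
    rw [e1 p, e1 xbar, map_sub, inner_sub_right]
    ring
  set L : ℝ := l2 ^ 2 - l1 ^ 2 with hLdef
  have heconv : Tendsto (fun k => pnorm S (x k - p) ^ 2 - pnorm S (x k - xbar) ^ 2)
      atTop (nhds L) := (hl2.pow 2).sub (hl1.pow 2)
  have heconv2 : Tendsto (fun k => (inner ℝ (x k) (S (p - xbar)) : ℝ)) atTop
      (nhds ((inner ℝ p (S p) - inner ℝ xbar (S xbar) - L) / 2)) := by
    have h1 : ∀ k, (inner ℝ (x k) (S (p - xbar)) : ℝ) =
        ((inner ℝ p (S p) : ℝ) - inner ℝ xbar (S xbar) -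
          (pnorm S (x k - p) ^ 2 - pnorm S (x k - xbar) ^ 2)) / 2 := by
      intro k
      have := hkey (x k)
      linarith
    refine Tendsto.congr (fun k => (h1 k).symm) ?_
    exact ((tendsto_const_nhds.sub heconv).div_const 2)
  have hA1 : Tendsto (fun k => (inner ℝ (x (φ k)) (S (p - xbar)) : ℝ)) atTop
      (nhds (inner ℝ xbar (S (p - xbar)))) := hφw _
  have hA2 := heconv2.comp hφ.tendsto_atTop
  have hxeq : ((inner ℝ p (S p) : ℝ) - inner ℝ xbar (S xbar) - L) / 2 =
      inner ℝ xbar (S (p - xbar)) := tendsto_nhds_unique hA2 hA1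
  have hB1 : Tendsto (fun k => (inner ℝ (x (ns (ψ k))) (S (p - xbar)) : ℝ)) atTop
      (nhds (inner ℝ p (S (p - xbar)))) := hpw' _
  have hB2 := heconv2.comp hσ
  have hpeq : ((inner ℝ p (S p) : ℝ) - inner ℝ xbar (S xbar) - L) / 2 =
      inner ℝ p (S (p - xbar)) := tendsto_nhds_unique hB2 hB1
  have hzero : (inner ℝ (p - xbar) (S (p - xbar)) : ℝ) = 0 := by
    rw [inner_sub_left]
    linarith
  have hpx : p = xbar := by
    have h1 := hSlb (p - xbar)
    rw [hzero] at h1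
    have h3 : ‖p - xbar‖ ^ 2 = 0 := by nlinarith [sq_nonneg ‖p - xbar‖]
    have h4 : ‖p - xbar‖ = 0 := pow_eq_zero_iff (by norm_num) |>.mp h3
    exact sub_eq_zero.mp (norm_eq_zero.mp h4)
  exact ⟨ψ, by rw [← hpx]; exact hpw' y⟩
end

section
/- Suppose Assumption 1 holds, that M_k : H → H is 1-strongly monotone w.r.t. ‖·‖_P and L_M-Lipschitz continuous w.r.t. ‖·‖, and let S be a bounded self-adjoint strongly positive linear operator on H. Then for all x, y ∈ H with x ≠ y one has M_k x ≠ M_k y, and the quantity μ_k^{x,y} := (⟨M_k x − M_k y, x − y⟩ − (β/4)‖x − y‖_P²) / ‖M_k x − M_k y‖²_{S⁻¹} satisfies (1 − β/4)·λ_min(P)/(L_M²·λ_max(S⁻¹)) ≤ μ_k^{x,y} ≤ λ_max(S)/λ_min(P). -/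
/-- bounds on the projection step-length `μ_k^{x,y}`. -/
theorem mu_bounds
    {H : Type*} [NormedAddCommGroup H] [InnerProductSpace ℝ H] [CompleteSpace H]
    (P Pinv S Sinv : H →L[ℝ] H)
    (hPsa : IsSelfAdjoint P) (hSsa : IsSelfAdjoint S)
    (hPpos : ∃ c > 0, ∀ x : H, c * ‖x‖ ^ 2 ≤ inner ℝ x (P x))
    (hSpos : ∃ c > 0, ∀ x : H, c * ‖x‖ ^ 2 ≤ inner ℝ x (S x))
    (hPinv₁ : P.comp Pinv = ContinuousLinearMap.id ℝ H)
    (hPinv₂ : Pinv.comp P = ContinuousLinearMap.id ℝ H)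
    (hSinv₁ : S.comp Sinv = ContinuousLinearMap.id ℝ H)
    (hSinv₂ : Sinv.comp S = ContinuousLinearMap.id ℝ H)
    -- Assumption 1
    (A : H → Set H) (hA : IsMaxMonotoneOp A)
    (β : ℝ) (hβ0 : 0 ≤ β) (hβ4 : β < 4)
    (C : H → H)
    (hC0 : β = 0 → ∀ x y : H, C x = C y)
    (hCpos : 0 < β → ∀ x y : H,
      (1 / β) * pnorm Pinv (C x - C y) ^ 2 ≤ inner ℝ (C x - C y) (x - y))
    (hzer : ∃ x : H, -C x ∈ A x)
    -- kernel M_k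
    (M : H → H) (L_M : ℝ)
    (hMsm : ∀ x y : H, pnorm P (x - y) ^ 2 ≤ inner ℝ (M x - M y) (x - y))
    (hMlip : ∀ x y : H, ‖M x - M y‖ ≤ L_M * ‖x - y‖)
    -- spectral constants
    (lminP lmaxS lmaxSinv : ℝ)
    (hlminP : 0 < lminP) (hlmaxS : 0 < lmaxS) (hlmaxSinv : 0 < lmaxSinv)
    (hPLB : ∀ x : H, lminP * ‖x‖ ^ 2 ≤ pnorm P x ^ 2)
    (hSUB : ∀ x : H, pnorm S x ^ 2 ≤ lmaxS * ‖x‖ ^ 2)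
    (hSinvUB : ∀ x : H, pnorm Sinv x ^ 2 ≤ lmaxSinv * ‖x‖ ^ 2) :
    ∀ x y : H, x ≠ y →
      M x ≠ M y ∧
      (1 - β / 4) * lminP / (L_M ^ 2 * lmaxSinv) ≤
        ((inner ℝ (M x - M y) (x - y) : ℝ) - β / 4 * pnorm P (x - y) ^ 2) /
          pnorm Sinv (M x - M y) ^ 2 ∧
      ((inner ℝ (M x - M y) (x - y) : ℝ) - β / 4 * pnorm P (x - y) ^ 2) /
          pnorm Sinv (M x - M y) ^ 2 ≤ lmaxS / lminP := by
  intro x y hxy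
  obtain ⟨cS, hcS, hSposx⟩ := hSpos
  set d := x - y with hd
  set m := M x - M y with hm
  have hd0 : d ≠ 0 := sub_ne_zero.mpr hxy
  have hdn : 0 < ‖d‖ := norm_pos_iff.mpr hd0
  have hSid : ∀ u : H, S (Sinv u) = u := fun u =>
    congrFun (congrArg DFunLike.coe hSinv₁) u
  have hSid₂ : ∀ u : H, Sinv (S u) = u := fun u =>
    congrFun (congrArg DFunLike.coe hSinv₂) u
  have hSsym : ∀ u v : H, (inner ℝ (S u) v : ℝ) = inner ℝ u (S v) := fun u v =>
    hSsa.isSymmetric u v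
  have hSinvpos : ∀ u : H, (0:ℝ) ≤ inner ℝ u (Sinv u) := by
    intro u
    have h1 : (inner ℝ u (Sinv u) : ℝ) = inner ℝ (Sinv u) (S (Sinv u)) := by
      rw [hSid u, real_inner_comm]
    rw [h1]
    exact le_trans (by positivity) (hSposx (Sinv u))
  have hSinvpos' : ∀ u : H, u ≠ 0 → (0:ℝ) < inner ℝ u (Sinv u) := by
    intro u hu
    have hw : Sinv u ≠ 0 := by
      intro h; apply hu; rw [← hSid u, h, map_zero]
    have h1 : (inner ℝ u (Sinv u) : ℝ) = inner ℝ (Sinv u) (S (Sinv u)) := by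
      rw [hSid u, real_inner_comm]
    rw [h1]
    have h2 := hSposx (Sinv u)
    have hwn : 0 < ‖Sinv u‖ := norm_pos_iff.mpr hw
    exact lt_of_lt_of_le (mul_pos hcS (pow_pos hwn 2)) h2
  have hpnSinv : ∀ u : H, pnorm Sinv u ^ 2 = inner ℝ u (Sinv u) := fun u =>
    Real.sq_sqrt (hSinvpos u)
  have hpnS : ∀ u : H, pnorm S u ^ 2 = inner ℝ u (S u) := fun u =>
    Real.sq_sqrt (le_trans (by positivity) (hSposx u))
  have hPd : lminP * ‖d‖ ^ 2 ≤ pnorm P d ^ 2 := hPLB d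
  have hPd0 : 0 < pnorm P d ^ 2 :=
    lt_of_lt_of_le (mul_pos hlminP (pow_pos hdn 2)) hPd
  have hmd : pnorm P d ^ 2 ≤ inner ℝ m d := hMsm x y
  have hmd0 : (0:ℝ) < inner ℝ m d := lt_of_lt_of_le hPd0 hmd
  have hm0 : m ≠ 0 := by
    intro h
    rw [h, inner_zero_left] at hmd0
    exact lt_irrefl 0 hmd0
  have hMne : M x ≠ M y := sub_ne_zero.mp hm0
  have hD0 : 0 < pnorm Sinv m ^ 2 := by
    rw [hpnSinv]; exact hSinvpos' m hm0
  have hmn : 0 < ‖m‖ := norm_pos_iff.mpr hm0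
  have hLM : 0 < L_M := by
    have h1 := hMlip x y
    nlinarith
  have hβ : β / 4 < 1 := by linarith
  set N : ℝ := (inner ℝ m d : ℝ) - β / 4 * pnorm P d ^ 2 with hN
  set D : ℝ := pnorm Sinv m ^ 2 with hDdef
  refine ⟨hMne, ?_, ?_⟩
  · -- lower bound
    rw [div_le_div_iff₀ (mul_pos (pow_pos hLM 2) hlmaxSinv) hD0]
    have hDub : D ≤ lmaxSinv * (L_M * ‖d‖) ^ 2 := by
      have h1 := hSinvUB m
      have h2 := hMlip x y
      have h3 : ‖m‖ ^ 2 ≤ (L_M * ‖d‖) ^ 2 := by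
        apply pow_le_pow_left₀ (norm_nonneg m) h2
      nlinarith [mul_le_mul_of_nonneg_left h3 (le_of_lt hlmaxSinv)]
    have hNlb : (1 - β / 4) * (lminP * ‖d‖ ^ 2) ≤ N := by
      rw [hN]; nlinarith
    have ha : (0:ℝ) ≤ (1 - β / 4) * lminP := by nlinarith
    have h1 : (1 - β / 4) * lminP * D ≤
        (1 - β / 4) * lminP * (lmaxSinv * (L_M * ‖d‖) ^ 2) :=
      mul_le_mul_of_nonneg_left hDub ha
    have h2 : (L_M ^ 2 * lmaxSinv) * ((1 - β / 4) * (lminP * ‖d‖ ^ 2)) ≤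
        (L_M ^ 2 * lmaxSinv) * N :=
      mul_le_mul_of_nonneg_left hNlb (le_of_lt (mul_pos (pow_pos hLM 2) hlmaxSinv))
    linarith [h1, h2]
  · -- upper bound
    rw [div_le_div_iff₀ hD0 hlminP]
    have hq : ∀ t : ℝ, 0 ≤ (inner ℝ m (Sinv m) : ℝ) + 2 * t * (inner ℝ m d : ℝ)
        + t ^ 2 * (inner ℝ d (S d) : ℝ) := by
      intro t
      have h0 := hSinvpos (m + t • S d)
      have hw : Sinv (m + t • S d) = Sinv m + t • d := by
        rw [map_add, map_smul, hSid₂]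
      rw [hw] at h0
      simp only [inner_add_left, inner_add_right, real_inner_smul_left,
        real_inner_smul_right] at h0
      have e1 : (inner ℝ (S d) (Sinv m) : ℝ) = inner ℝ m d := by
        rw [hSsym d (Sinv m), hSid m, real_inner_comm]
      have e2 : (inner ℝ (S d) d : ℝ) = inner ℝ d (S d) := real_inner_comm _ _
      rw [e1, e2] at h0
      linarith [h0]
    have hdS0 : 0 < (inner ℝ d (S d) : ℝ) :=
      lt_of_lt_of_le (mul_pos hcS (pow_pos hdn 2)) (hSposx d)
    have hCS : (inner ℝ m d : ℝ) ^ 2 ≤ (inner ℝ m (Sinv m) : ℝ) * (inner ℝ d (S d) : ℝ) := by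
      set t : ℝ := -(inner ℝ m d : ℝ) / (inner ℝ d (S d) : ℝ) with ht
      have h1 := hq t
      have h2 : t * (inner ℝ d (S d) : ℝ) = -(inner ℝ m d : ℝ) :=
        div_mul_cancel₀ _ (ne_of_gt hdS0)
      have h3 : 0 ≤ (inner ℝ d (S d) : ℝ) * ((inner ℝ m (Sinv m) : ℝ)
          + 2 * t * (inner ℝ m d : ℝ) + t ^ 2 * (inner ℝ d (S d) : ℝ)) :=
        mul_nonneg (le_of_lt hdS0) h1
      have hexp : (inner ℝ d (S d) : ℝ) * ((inner ℝ m (Sinv m) : ℝ)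
          + 2 * t * (inner ℝ m d : ℝ) + t ^ 2 * (inner ℝ d (S d) : ℝ))
          = (inner ℝ m (Sinv m) : ℝ) * (inner ℝ d (S d) : ℝ) - (inner ℝ m d : ℝ) ^ 2 := by
        calc (inner ℝ d (S d) : ℝ) * ((inner ℝ m (Sinv m) : ℝ)
            + 2 * t * (inner ℝ m d : ℝ) + t ^ 2 * (inner ℝ d (S d) : ℝ))
            = (inner ℝ m (Sinv m) : ℝ) * (inner ℝ d (S d) : ℝ)
              + 2 * (t * (inner ℝ d (S d) : ℝ)) * (inner ℝ m d : ℝ)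
              + (t * (inner ℝ d (S d) : ℝ)) ^ 2 := by ring
          _ = (inner ℝ m (Sinv m) : ℝ) * (inner ℝ d (S d) : ℝ) - (inner ℝ m d : ℝ) ^ 2 := by
              rw [h2]; ring
      rw [hexp] at h3
      linarith [h3]
    have hSd : (inner ℝ d (S d) : ℝ) ≤ lmaxS * ‖d‖ ^ 2 := by
      have h1 := hSUB d
      rw [hpnS d] at h1
      exact h1
    have hmsm0 : (0:ℝ) < inner ℝ m (Sinv m) := hSinvpos' m hm0
    have key : (inner ℝ m d : ℝ) * (lminP * ‖d‖ ^ 2) ≤ D * (lmaxS * ‖d‖ ^ 2) := by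
      have h1 : (inner ℝ m d : ℝ) * (lminP * ‖d‖ ^ 2) ≤ (inner ℝ m d : ℝ) * (inner ℝ m d : ℝ) :=
        mul_le_mul_of_nonneg_left (le_trans hPd hmd) (le_of_lt hmd0)
      have h3 : (inner ℝ m (Sinv m) : ℝ) * (inner ℝ d (S d) : ℝ) ≤
          (inner ℝ m (Sinv m) : ℝ) * (lmaxS * ‖d‖ ^ 2) :=
        mul_le_mul_of_nonneg_left hSd (le_of_lt hmsm0)
      rw [hDdef, hpnSinv]
      linarith [h1, h3, hCS]
    have hNle : N ≤ (inner ℝ m d : ℝ) := by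
      rw [hN]
      have h8 : (0:ℝ) ≤ β / 4 * pnorm P d ^ 2 :=
        mul_nonneg (by linarith) (le_of_lt hPd0)
      linarith
    have h6 : N * (lminP * ‖d‖ ^ 2) ≤ (inner ℝ m d : ℝ) * (lminP * ‖d‖ ^ 2) :=
      mul_le_mul_of_nonneg_right hNle (by positivity)
    have h7 : N * lminP * ‖d‖ ^ 2 ≤ lmaxS * D * ‖d‖ ^ 2 := by linarith [key, h6]
    exact le_of_mul_le_mul_right h7 (pow_pos hdn 2)
end

section
/- (Linear convergence of NOFOB under metric subregularity.) Suppose H is a finite-dimensional real Hilbert space, Assumption 1 holds, each M_k : H → H is 1-strongly monotone w.r.t. ‖·‖_P and L_M-Lipschitz continuous w.r.t. ‖·‖, S is a bounded self-adjoint strongly positive linear operator, and θ_k ∈ [ε_θ, 2 − ε_θ] for some ε_θ ∈ (0, 1). Let Z := zer(A + C) and assume the uniform metric subregularity condition: there exist κ ≥ 0, ν > 0 and an open set U ⊇ Z such that dist_S(x, Z) ≤ κ‖v‖_S whenever x ∈ U, v − Cx ∈ Ax and ‖v‖_S < ν. Let (x_k), (x̂_k) be generated by NOFOB: x̂_k is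 the unique point with M_k x_k − C x_k − M_k x̂_k ∈ A x̂_k, H_k := {z : ⟨M_k x_k − M_k x̂_k, z − x̂_k⟩ ≤ (β/4)‖x_k − x̂_k‖_P²}, and x_{k+1} := (1 − θ_k)x_k + θ_k Π_{H_k}^S(x_k). Then there exist K₀ ∈ ℕ and c ∈ [0, 1) such that dist_S(x_{k+1}, Z) ≤ c·dist_S(x_k, Z) for all k ≥ K₀ (local Q-linear convergence), and there exist x̄ ∈ Z and R ≥ 0 such that ‖x_k − x̄‖_S ≤ R·c^k for all k ≥ K₀ (local R-linear strong convergence to a solution). -/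
open Filter Topology

/-- The `‖·‖_S`-distance from a point to a set. -/
noncomputable def distS {H : Type*} [NormedAddCommGroup H] [InnerProductSpace ℝ H]
    (S : H →L[ℝ] H) (x : H) (Ω : Set H) : ℝ := ⨅ y : Ω, pnorm S (x - (y : H))

set_option linter.unusedSectionVars false
set_option linter.unusedVariables false
section PnormAPI
variable {H : Type*} [NormedAddCommGroup H] [InnerProductSpace ℝ H]
variable (S : H →L[ℝ] H)

/-- symmetry hypothesis -/
def SymmOp : Prop := ∀ u v : H, (inner ℝ u (S v) : ℝ) = inner ℝ v (S u)

variable {S}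

lemma q_add (hs : SymmOp S) (u v : H) :
    (inner ℝ (u + v) (S (u + v)) : ℝ) =
      inner ℝ u (S u) + 2 * inner ℝ u (S v) + inner ℝ v (S v) := by
  simp only [map_add, inner_add_left, inner_add_right]
  rw [hs v u]; ring

lemma q_sub (hs : SymmOp S) (u v : H) :
    (inner ℝ (u - v) (S (u - v)) : ℝ) =
      inner ℝ u (S u) - 2 * inner ℝ u (S v) + inner ℝ v (S v) := by
  simp only [map_sub, inner_sub_left, inner_sub_right]
  rw [hs v u]; ring

lemma q_smul (t : ℝ) (u : H) :
    (inner ℝ (t • u) (S (t • u)) : ℝ) = t ^ 2 * inner ℝ u (S u) := by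
  simp only [map_smul, inner_smul_left, inner_smul_right, RCLike.conj_to_real]
  ring

section pos
variable (hpos : ∀ x : H, (0:ℝ) ≤ inner ℝ x (S x))
include hpos

lemma pnorm_nonneg' (x : H) : 0 ≤ pnorm S x := Real.sqrt_nonneg _

lemma pnorm_sq (x : H) : pnorm S x ^ 2 = inner ℝ x (S x) := Real.sq_sqrt (hpos x)

lemma pnorm_neg (x : H) : pnorm S (-x) = pnorm S x := by
  unfold pnorm
  rw [show (inner ℝ (-x) (S (-x)) : ℝ) = inner ℝ x (S x) by simp]

lemma pnorm_sub_comm (x y : H) : pnorm S (x - y) = pnorm S (y - x) := by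
  rw [← pnorm_neg hpos (y - x), neg_sub]

lemma inner_sq_le (hs : SymmOp S) (u v : H) :
    (inner ℝ u (S v) : ℝ)^2 ≤ inner ℝ u (S u) * inner ℝ v (S v) := by
  set Qu : ℝ := inner ℝ u (S u) with hQu
  set Qv : ℝ := inner ℝ v (S v) with hQv
  set B : ℝ := inner ℝ u (S v) with hB
  rcases eq_or_lt_of_le (hpos v) with hv | hv
  · -- Qv = 0
    have hv0 : Qv = 0 := hv.symm
    have key : B = 0 := by
      by_contra hne
      have h1 : ∀ t : ℝ, 0 ≤ Qu + 2 * (t * B) := by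
        intro t
        have h := hpos (u + t • v)
        rw [q_add hs u (t • v)] at h
        rw [q_smul] at h
        simp only [map_smul, inner_smul_right] at h
        rw [← hQu, ← hQv, ← hB, ← hv0] at h
        nlinarith [h]
      have h2 := h1 ((-Qu - 1) / (2 * B))
      have h3 : 2 * ((-Qu - 1) / (2 * B) * B) = -Qu - 1 := by field_simp
      linarith [h2, h3 ▸ h2]
    rw [key, ← hv0]; nlinarith [hpos u]
  · have h0 := hpos (Qv • u - B • v)
    rw [q_sub hs] at h0
    rw [q_smul, q_smul] at h0
    simp only [map_smul, inner_smul_left, inner_smul_right, RCLike.conj_to_real] at h0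
    rw [← hQu, ← hQv, ← hB] at h0
    nlinarith [h0, hv]

lemma pnorm_cs (hs : SymmOp S) (u v : H) :
    (inner ℝ u (S v) : ℝ) ≤ pnorm S u * pnorm S v := by
  have h1 := inner_sq_le hpos hs u v
  have h2 : pnorm S u * pnorm S v = Real.sqrt ((inner ℝ u (S u) : ℝ) * inner ℝ v (S v)) := by
    rw [pnorm, pnorm, ← Real.sqrt_mul (hpos u)]
  rw [h2]
  calc (inner ℝ u (S v) : ℝ) ≤ |(inner ℝ u (S v) : ℝ)| := le_abs_self _
  _ = Real.sqrt ((inner ℝ u (S v):ℝ)^2) := (Real.sqrt_sq_eq_abs _).symm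
  _ ≤ _ := Real.sqrt_le_sqrt h1

lemma pnorm_triangle (hs : SymmOp S) (u v : H) :
    pnorm S (u + v) ≤ pnorm S u + pnorm S v := by
  have h1 : (inner ℝ (u+v) (S (u+v)) : ℝ) ≤ (pnorm S u + pnorm S v)^2 := by
    rw [q_add hs]
    have := pnorm_cs hpos hs u v
    have h2 := pnorm_sq hpos u
    have h3 := pnorm_sq hpos v
    nlinarith
  calc pnorm S (u + v) = Real.sqrt (inner ℝ (u+v) (S (u+v)) : ℝ) := rfl
  _ ≤ Real.sqrt ((pnorm S u + pnorm S v)^2) := Real.sqrt_le_sqrt h1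
  _ = |pnorm S u + pnorm S v| := Real.sqrt_sq_eq_abs _
  _ = pnorm S u + pnorm S v := abs_of_nonneg (add_nonneg (Real.sqrt_nonneg _) (Real.sqrt_nonneg _))

lemma pnorm_triangle_sub (hs : SymmOp S) (u v w : H) :
    pnorm S (u - w) ≤ pnorm S (u - v) + pnorm S (v - w) := by
  have h : u - w = (u - v) + (v - w) := by abel
  rw [h]; exact pnorm_triangle hpos hs _ _

end pos

lemma pnorm_smul (t : ℝ) (u : H) : pnorm S (t • u) = |t| * pnorm S u := by
  unfold pnorm
  rw [q_smul, Real.sqrt_mul (sq_nonneg t), Real.sqrt_sq_eq_abs]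

lemma pnorm_le_sqrt_opNorm (x : H) : pnorm S x ≤ Real.sqrt ‖S‖ * ‖x‖ := by
  have h1 : (inner ℝ x (S x) : ℝ) ≤ ‖S‖ * ‖x‖^2 := by
    calc (inner ℝ x (S x) : ℝ) ≤ ‖x‖ * ‖S x‖ := real_inner_le_norm x (S x)
    _ ≤ ‖x‖ * (‖S‖ * ‖x‖) := by gcongr; exact S.le_opNorm x
    _ = ‖S‖ * ‖x‖^2 := by ring
  calc pnorm S x ≤ Real.sqrt (‖S‖ * ‖x‖^2) := Real.sqrt_le_sqrt h1
  _ = Real.sqrt ‖S‖ * ‖x‖ := by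
      rw [Real.sqrt_mul (norm_nonneg S), Real.sqrt_sq (norm_nonneg x)]

lemma sqrt_mul_norm_le_pnorm {c : ℝ} (hc : 0 < c)
    (h : ∀ x : H, c * ‖x‖^2 ≤ inner ℝ x (S x)) (x : H) :
    Real.sqrt c * ‖x‖ ≤ pnorm S x := by
  have he : Real.sqrt c * ‖x‖ = Real.sqrt (c * ‖x‖^2) := by
    rw [Real.sqrt_mul hc.le, Real.sqrt_sq (norm_nonneg x)]
  rw [he]
  exact Real.sqrt_le_sqrt (h x)

lemma pnorm_eq_zero_iff {c : ℝ} (hc : 0 < c)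
    (h : ∀ x : H, c * ‖x‖^2 ≤ inner ℝ x (S x)) (x : H) :
    pnorm S x = 0 ↔ x = 0 := by
  constructor
  · intro h0
    have h1 := sqrt_mul_norm_le_pnorm hc h x
    rw [h0] at h1
    have hsc : 0 < Real.sqrt c := Real.sqrt_pos.2 hc
    have h2 : ‖x‖ ≤ 0 := by nlinarith [norm_nonneg x]
    simpa using le_antisymm h2 (norm_nonneg x)
  · rintro rfl; simp [pnorm]

lemma continuous_pnorm : Continuous (pnorm S) := by
  have h : Continuous fun x : H => (inner ℝ x (S x) : ℝ) :=
    Continuous.inner continuous_id S.continuous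
  exact Real.continuous_sqrt.comp h

-- sq root comparison helper
lemma sq_le_imp_le {a b : ℝ} (ha : 0 ≤ a) (hb : 0 ≤ b) (h : a^2 ≤ b^2) : a ≤ b := by
  nlinarith

end PnormAPI

section DistAPI
variable {H : Type*} [NormedAddCommGroup H] [InnerProductSpace ℝ H]
variable {S : H →L[ℝ] H} {Ω : Set H}

lemma distS_nonneg (x : H) : 0 ≤ distS S x Ω :=
  Real.iInf_nonneg fun _ => Real.sqrt_nonneg _

lemma distS_le {z : H} (hz : z ∈ Ω) (x : H) : distS S x Ω ≤ pnorm S (x - z) := by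
  rw [distS]
  exact ciInf_le ⟨0, by rintro t ⟨w, rfl⟩; exact Real.sqrt_nonneg _⟩ (⟨z, hz⟩ : Ω)

lemma le_distS (hne : Ω.Nonempty) {a : ℝ} {x : H}
    (h : ∀ z ∈ Ω, a ≤ pnorm S (x - z)) : a ≤ distS S x Ω := by
  haveI := hne.to_subtype
  exact le_ciInf fun z => h z z.2

lemma distS_le_pnorm_add (hpos : ∀ x : H, (0:ℝ) ≤ inner ℝ x (S x)) (hs : SymmOp S)
    (hne : Ω.Nonempty) (x y : H) :
    distS S x Ω ≤ pnorm S (x - y) + distS S y Ω := by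
  haveI := hne.to_subtype
  have h : ∀ z : Ω, distS S x Ω - pnorm S (x - y) ≤ pnorm S (y - z) := fun z => by
    have h1 : distS S x Ω ≤ pnorm S (x - (z : H)) := distS_le z.2 x
    have h2 := pnorm_triangle_sub hpos hs x y (z : H)
    linarith
  have h3 : distS S x Ω - pnorm S (x - y) ≤ distS S y Ω := le_ciInf h
  linarith

end DistAPI

set_option maxHeartbeats 2000000 in
/-- local linear convergence of NOFOB under metric subregularity in
finite dimensions. -/
theorem nofob_linear_convergence
    {H : Type*} [NormedAddCommGroup H] [InnerProductSpace ℝ H] [FiniteDimensional ℝ H]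
    (P Pinv S : H →L[ℝ] H)
    (hPsa : IsSelfAdjoint P) (hSsa : IsSelfAdjoint S)
    (hPpos : ∃ c > 0, ∀ x : H, c * ‖x‖ ^ 2 ≤ inner ℝ x (P x))
    (hSpos : ∃ c > 0, ∀ x : H, c * ‖x‖ ^ 2 ≤ inner ℝ x (S x))
    (hPinv₁ : P.comp Pinv = ContinuousLinearMap.id ℝ H)
    (hPinv₂ : Pinv.comp P = ContinuousLinearMap.id ℝ H)
    -- Assumption 1
    (A : H → Set H) (hA : IsMaxMonotoneOp A)
    (β : ℝ) (hβ0 : 0 ≤ β) (hβ4 : β < 4)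
    (C : H → H)
    (hC0 : β = 0 → ∀ x y : H, C x = C y)
    (hCpos : 0 < β → ∀ x y : H,
      (1 / β) * pnorm Pinv (C x - C y) ^ 2 ≤ inner ℝ (C x - C y) (x - y))
    (Z : Set H) (hZ : Z = {x : H | -C x ∈ A x}) (hzer : Z.Nonempty)
    -- kernels M_k
    (M : ℕ → H → H) (L_M : ℝ)
    (hMsm : ∀ k, ∀ x y : H, pnorm P (x - y) ^ 2 ≤ inner ℝ (M k x - M k y) (x - y))
    (hMlip : ∀ k, ∀ x y : H, ‖M k x - M k y‖ ≤ L_M * ‖x - y‖)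
    -- relaxation parameters
    (θ : ℕ → ℝ) (εθ : ℝ) (hεθ : 0 < εθ ∧ εθ < 1)
    (hθ : ∀ k, εθ ≤ θ k ∧ θ k ≤ 2 - εθ)
    -- uniform metric subregularity of A + C at solutions for 0
    (κ ν : ℝ) (hκ : 0 ≤ κ) (hν : 0 < ν)
    (U : Set H) (hUopen : IsOpen U) (hZU : Z ⊆ U)
    (hsubreg : ∀ x v : H, x ∈ U → v - C x ∈ A x → pnorm S v < ν →
      distS S x Z ≤ κ * pnorm S v)
    -- the algorithm
    (x xh p : ℕ → H)
    (hxh : ∀ k, M k (x k) - C (x k) - M k (xh k) ∈ A (xh k))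
    (hp : ∀ k,
      (inner ℝ (M k (x k) - M k (xh k)) (p k - xh k) : ℝ) ≤
        β / 4 * pnorm P (x k - xh k) ^ 2 ∧
      ∀ z : H, (inner ℝ (M k (x k) - M k (xh k)) (z - xh k) : ℝ) ≤
          β / 4 * pnorm P (x k - xh k) ^ 2 →
        pnorm S (p k - x k) ≤ pnorm S (z - x k))
    (hupd : ∀ k, x (k + 1) = (1 - θ k) • x k + θ k • p k) :
    ∃ (K₀ : ℕ) (c : ℝ), 0 ≤ c ∧ c < 1 ∧
      (∀ k ≥ K₀, distS S (x (k + 1)) Z ≤ c * distS S (x k) Z) ∧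
      ∃ xbar ∈ Z, ∃ R : ℝ, 0 ≤ R ∧ ∀ k ≥ K₀, pnorm S (x k - xbar) ≤ R * c ^ k := by
  obtain ⟨hεθ0, hεθ1⟩ := hεθ
  obtain ⟨cP, hcP0, hcP⟩ := hPpos
  obtain ⟨cS, hcS0, hcS⟩ := hSpos
  obtain ⟨z₀, hz₀⟩ := hzer
  haveI : Nonempty Z := ⟨z₀, hz₀⟩
  have hzer : Z.Nonempty := ⟨z₀, hz₀⟩
  -- trivial case
  by_cases hsub : Subsingleton H
  · have hzero : ∀ u : H, u = 0 := fun u => Subsingleton.elim u 0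
    have hpz : ∀ u : H, pnorm S u = 0 := fun u => by rw [hzero u]; simp [pnorm]
    have hdz : ∀ u : H, distS S u Z = 0 := fun u => by
      rw [distS]
      have : (fun y : Z => pnorm S (u - (y:H))) = fun _ => (0:ℝ) := by
        funext y; exact hpz _
      rw [this, ciInf_const]
    exact ⟨0, 1/2, by norm_num, by norm_num,
      fun k _ => by rw [hdz, hdz]; norm_num,
      z₀, hz₀, 0, le_refl _, fun k _ => by rw [hpz]; positivity⟩
  haveI : Nontrivial H := not_subsingleton_iff_nontrivial.mp hsub
  -- basic facts
  have hPpos' : ∀ u : H, (0:ℝ) ≤ inner ℝ u (P u) := fun u => le_trans (by positivity) (hcP u)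
  have hSpos' : ∀ u : H, (0:ℝ) ≤ inner ℝ u (S u) := fun u => le_trans (by positivity) (hcS u)
  have hPsym : SymmOp P := fun u v => by
    have h : (inner ℝ (P u) v : ℝ) = inner ℝ u (P v) :=
      (ContinuousLinearMap.isSelfAdjoint_iff_isSymmetric.mp hPsa) u v
    rw [← h, real_inner_comm]
  have hSsym : SymmOp S := fun u v => by
    have h : (inner ℝ (S u) v : ℝ) = inner ℝ u (S v) :=
      (ContinuousLinearMap.isSelfAdjoint_iff_isSymmetric.mp hSsa) u v
    rw [← h, real_inner_comm]
  have hPinvP : ∀ w : H, Pinv (P w) = w := fun w => by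
    have h := ContinuousLinearMap.ext_iff.mp hPinv₂ w
    simpa using h
  have hPPinv : ∀ w : H, P (Pinv w) = w := fun w => by
    have h := ContinuousLinearMap.ext_iff.mp hPinv₁ w
    simpa using h
  have hPinvsym : SymmOp Pinv := fun u v => by
    have h0 : (inner ℝ (P (Pinv u)) (Pinv v) : ℝ) = inner ℝ (Pinv u) (P (Pinv v)) :=
      (ContinuousLinearMap.isSelfAdjoint_iff_isSymmetric.mp hPsa) (Pinv u) (Pinv v)
    have h1 : (inner ℝ u (Pinv v) : ℝ) = inner ℝ (P (Pinv u)) (Pinv v) := by rw [hPPinv]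
    rw [h1, h0, hPPinv, real_inner_comm]
  have hPinvpos : ∀ u : H, (0:ℝ) ≤ inner ℝ u (Pinv u) := fun u => by
    rw [← hPPinv u, hPinvP, real_inner_comm]
    exact hPpos' _
  have hnP : 0 < ‖P‖ := by
    obtain ⟨u, hu⟩ := exists_ne (0 : H)
    have h1 := hcP u
    have h2 : (inner ℝ u (P u) : ℝ) ≤ ‖u‖ * (‖P‖ * ‖u‖) := le_trans (real_inner_le_norm u (P u))
      (by gcongr; exact P.le_opNorm u)
    have hu0 : 0 < ‖u‖ := norm_pos_iff.mpr hu
    nlinarith [mul_pos hu0 hu0]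
  -- Pinv strong positivity
  set cPinv : ℝ := cP / ‖P‖^2 with hcPinvdef
  have hcPinv0 : 0 < cPinv := by positivity
  have hPinvlb : ∀ u : H, cPinv * ‖u‖^2 ≤ inner ℝ u (Pinv u) := fun u => by
    have h1 : (inner ℝ u (Pinv u) : ℝ) = inner ℝ (Pinv u) (P (Pinv u)) := by
      conv_lhs => rw [← hPPinv u, hPinvP, real_inner_comm]
    have h2 : ‖u‖ ≤ ‖P‖ * ‖Pinv u‖ := by
      conv_lhs => rw [← hPPinv u]
      exact P.le_opNorm _
    have h3 := hcP (Pinv u)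
    rw [h1, hcPinvdef]
    rw [div_mul_eq_mul_div, div_le_iff₀ (by positivity)]
    nlinarith [norm_nonneg u, norm_nonneg (Pinv u), mul_self_le_mul_self (norm_nonneg u) h2,
      mul_nonneg (norm_nonneg P) (norm_nonneg (Pinv u))]
  -- mixed Cauchy-Schwarz
  have hmixedCS : ∀ u w : H, (inner ℝ u w : ℝ) ≤ pnorm Pinv u * pnorm P w := by
    intro u w
    have h1 : (inner ℝ u w : ℝ) = inner ℝ u (Pinv (P w)) := by rw [hPinvP w]
    have h2 := pnorm_cs hPinvpos hPinvsym u (P w)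
    have h3 : pnorm Pinv (P w) = pnorm P w := by
      rw [pnorm, pnorm, hPinvP w, real_inner_comm]
    rw [h1]; rw [h3] at h2; exact h2
  -- Young's inequality
  have hYoung : ∀ u w : H, 0 < β →
      (inner ℝ u w : ℝ) ≤ (1/β) * pnorm Pinv u ^ 2 + (β/4) * pnorm P w ^ 2 := by
    intro u w hb
    have h1 := hmixedCS u w
    have h2 : 0 ≤ pnorm Pinv u := Real.sqrt_nonneg _
    have h3 : 0 ≤ pnorm P w := Real.sqrt_nonneg _
    set a := pnorm Pinv u
    set b := pnorm P w
    have h5 : 4 * β * (a * b) ≤ 4 * a ^ 2 + β ^ 2 * b ^ 2 := by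
      nlinarith [sq_nonneg (2 * a - β * b)]
    have h6 : a * b ≤ 1 / β * a ^ 2 + β / 4 * b ^ 2 := by
      rw [show 1 / β * a ^ 2 + β / 4 * b ^ 2 = (4 * a ^ 2 + β ^ 2 * b ^ 2) / (4 * β) by
        field_simp]
      rw [le_div_iff₀ (by positivity)]
      nlinarith [h5]
    linarith
  -- cocoercivity Lipschitz bound
  have hCP : ∀ a b : H, pnorm Pinv (C a - C b) ≤ β * pnorm P (a - b) := by
    intro a b
    by_cases hb : β = 0
    · have := hC0 hb a b
      rw [this, sub_self]
      have : pnorm Pinv (0:H) = 0 := by simp [pnorm]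
      rw [this, hb]; simp
    · have hbpos : 0 < β := lt_of_le_of_ne hβ0 (Ne.symm hb)
      have h1 := hCpos hbpos a b
      have h2 := hmixedCS (C a - C b) (a - b)
      have h3 : 0 ≤ pnorm Pinv (C a - C b) := Real.sqrt_nonneg _
      have h4 : 0 ≤ pnorm P (a - b) := Real.sqrt_nonneg _
      rcases eq_or_lt_of_le h3 with h5 | h5
      · rw [← h5]; positivity
      · have e : β * (1 / β * pnorm Pinv (C a - C b) ^ 2) = pnorm Pinv (C a - C b) ^ 2 := by
          field_simp
        have h6 : pnorm Pinv (C a - C b) ^ 2 ≤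
            β * (pnorm Pinv (C a - C b) * pnorm P (a - b)) := by
          nlinarith [mul_le_mul_of_nonneg_left (le_trans h1 h2) hβ0]
        nlinarith [h6, h5]
  set Lc : ℝ := β * Real.sqrt ‖P‖ / Real.sqrt cPinv with hLcdef
  have hLc0 : 0 ≤ Lc := by positivity
  have hClip : ∀ a b : H, ‖C a - C b‖ ≤ Lc * ‖a - b‖ := by
    intro a b
    have h1 := sqrt_mul_norm_le_pnorm hcPinv0 hPinvlb (C a - C b)
    have h2 := hCP a b
    have h3 := pnorm_le_sqrt_opNorm (S := P) (a - b)
    have h4 : 0 < Real.sqrt cPinv := Real.sqrt_pos.2 hcPinv0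
    rw [hLcdef, div_mul_eq_mul_div, le_div_iff₀ h4]
    nlinarith [norm_nonneg (a - b), Real.sqrt_nonneg ‖P‖]
  -- Lipschitz constant for M
  set L' : ℝ := max L_M 1 with hL'def
  have hL'0 : (0:ℝ) < L' := lt_of_lt_of_le one_pos (le_max_right _ _)
  have hMlip' : ∀ k, ∀ a b : H, ‖M k a - M k b‖ ≤ L' * ‖a - b‖ := fun k a b =>
    le_trans (hMlip k a b) (mul_le_mul_of_nonneg_right (le_max_left _ _) (norm_nonneg _))
  -- notation
  set r : ℕ → ℝ := fun k => pnorm S (p k - x k) with hrdef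
  set d : ℕ → ℝ := fun k => distS S (x k) Z with hddef
  set vv : ℕ → H := fun k => (M k (x k) - M k (xh k)) - (C (x k) - C (xh k)) with hvvdef
  have hr0 : ∀ k, 0 ≤ r k := fun k => Real.sqrt_nonneg _
  have hd0 : ∀ k, 0 ≤ d k := fun k => distS_nonneg _
  have hvvA : ∀ k, vv k - C (xh k) ∈ A (xh k) := by
    intro k
    have h : vv k - C (xh k) = M k (x k) - C (x k) - M k (xh k) := by
      simp only [hvvdef]; abel
    rw [h]; exact hxh k
  -- Z is in every halfspace
  have hZHk : ∀ k, ∀ z ∈ Z, (inner ℝ (M k (x k) - M k (xh k)) (z - xh k) : ℝ) ≤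
      β / 4 * pnorm P (x k - xh k) ^ 2 := by
    intro k z hz
    have hu : M k (x k) - C (x k) - M k (xh k) ∈ A (xh k) := hxh k
    have hzA : -C z ∈ A z := by rw [hZ] at hz; exact hz
    have hmono := hA.1 hu hzA
    have e1 : (M k (x k) - C (x k) - M k (xh k)) - -C z
        = (M k (x k) - M k (xh k)) - (C (x k) - C z) := by abel
    rw [e1] at hmono
    set g : H := C (x k) - C z with hgdef
    have e2 : (inner ℝ (M k (x k) - M k (xh k)) (z - xh k) : ℝ)
        = inner ℝ g (z - xh k) - inner ℝ ((M k (x k) - M k (xh k)) - g) (xh k - z) := by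
      simp only [inner_sub_left, inner_sub_right]; ring
    by_cases hb : β = 0
    · have hCeq := hC0 hb (x k) z
      have hg0 : g = 0 := by rw [hgdef, hCeq, sub_self]
      rw [hg0, sub_zero] at hmono
      rw [e2, hg0]
      simp only [inner_zero_left, zero_sub, sub_zero]
      rw [hb]
      simp only [zero_div, zero_mul]
      simpa using hmono
    · have hbpos : 0 < β := lt_of_le_of_ne hβ0 (Ne.symm hb)
      have hco := hCpos hbpos (x k) z
      have hy := hYoung g (x k - xh k) hbpos
      have e3 : (inner ℝ g (z - xh k) : ℝ) = -(inner ℝ g (x k - z)) + inner ℝ g (x k - xh k) := by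
        simp only [inner_sub_right]; ring
      rw [e2, e3]
      linarith
  -- variational inequality for the projection
  have hVI : ∀ k, ∀ z : H, (inner ℝ (M k (x k) - M k (xh k)) (z - xh k) : ℝ) ≤
      β / 4 * pnorm P (x k - xh k) ^ 2 →
      (inner ℝ (p k - x k) (S (z - p k)) : ℝ) ≥ 0 := by
    intro k z hzH
    have hpH := (hp k).1
    have hmin := (hp k).2
    have key : ∀ t : ℝ, 0 < t → t ≤ 1 →
        0 ≤ 2 * (inner ℝ (p k - x k) (S (z - p k)) : ℝ)
          + t * inner ℝ (z - p k) (S (z - p k)) := by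
      intro t ht0 ht1
      have hzt : (inner ℝ (M k (x k) - M k (xh k)) ((p k + t • (z - p k)) - xh k) : ℝ)
          ≤ β / 4 * pnorm P (x k - xh k) ^ 2 := by
        have e4 : (inner ℝ (M k (x k) - M k (xh k)) ((p k + t • (z - p k)) - xh k) : ℝ)
            = (1 - t) * inner ℝ (M k (x k) - M k (xh k)) (p k - xh k)
              + t * inner ℝ (M k (x k) - M k (xh k)) (z - xh k) := by
          simp only [inner_add_right, inner_sub_right, real_inner_smul_right]; ring
        rw [e4]
        nlinarith [hpH, hzH]
      have hmin' := hmin _ hzt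
      have e5 : (p k + t • (z - p k)) - x k = (p k - x k) + t • (z - p k) := by
        rw [add_sub_right_comm]
      rw [e5] at hmin'
      have hq : (inner ℝ (p k - x k) (S (p k - x k)) : ℝ)
          ≤ inner ℝ ((p k - x k) + t • (z - p k)) (S ((p k - x k) + t • (z - p k))) := by
        have h1 := pnorm_sq hSpos' (p k - x k)
        have h2 := pnorm_sq hSpos' ((p k - x k) + t • (z - p k))
        have h3 : (0:ℝ) ≤ pnorm S (p k - x k) := Real.sqrt_nonneg _
        nlinarith [hmin']
      rw [q_add hSsym] at hq
      have e6 : (inner ℝ (p k - x k) (S (t • (z - p k))) : ℝ)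
          = t * inner ℝ (p k - x k) (S (z - p k)) := by
        rw [map_smul, inner_smul_right]
      rw [e6, q_smul] at hq
      nlinarith [hq]
    set B2 : ℝ := inner ℝ (p k - x k) (S (z - p k)) with hB2def
    set Q2 : ℝ := inner ℝ (z - p k) (S (z - p k)) with hQ2def
    have hQ20 : 0 ≤ Q2 := hSpos' _
    by_contra hBneg
    push_neg at hBneg
    rcases eq_or_lt_of_le hQ20 with hQ2z | hQ2pos
    · have := key 1 one_pos le_rfl
      rw [← hQ2z] at this
      linarith
    · have ht0 : 0 < min 1 (-B2 / Q2) := lt_min one_pos (div_pos (by linarith) hQ2pos)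
      have ht1 : min 1 (-B2 / Q2) ≤ 1 := min_le_left _ _
      have hkey := key _ ht0 ht1
      have h7 : min 1 (-B2 / Q2) * Q2 ≤ (-B2 / Q2) * Q2 :=
        mul_le_mul_of_nonneg_right (min_le_right _ _) hQ20
      have h8 : (-B2 / Q2) * Q2 = -B2 := div_mul_cancel₀ _ (ne_of_gt hQ2pos)
      linarith
  -- Fejér inequality
  have hFej : ∀ k, ∀ z ∈ Z, pnorm S (x (k+1) - z)^2 ≤
      pnorm S (x k - z)^2 - θ k * (2 - θ k) * r k ^ 2 := by
    intro k z hz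
    have hVIz := hVI k z (hZHk k z hz)
    set w1 : H := x k - z with hw1def
    set w2 : H := p k - x k with hw2def
    have e7 : z - p k = -(w1 + w2) := by rw [hw1def, hw2def]; abel
    rw [e7] at hVIz
    have e8 : (inner ℝ w2 (S (-(w1 + w2))) : ℝ) = -(inner ℝ w2 (S w1) + inner ℝ w2 (S w2)) := by
      rw [map_neg, inner_neg_right, map_add, inner_add_right]
    rw [e8] at hVIz
    have hx1 : x (k+1) - z = w1 + θ k • w2 := by
      rw [hupd k, hw1def, hw2def]; module
    rw [hx1]
    have h1 := pnorm_sq hSpos' (w1 + θ k • w2)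
    have h2 := pnorm_sq hSpos' w1
    have h3 : r k ^ 2 = inner ℝ w2 (S w2) := pnorm_sq hSpos' w2
    rw [h1, h2, h3, q_add hSsym, q_smul]
    have e9 : (inner ℝ w1 (S (θ k • w2)) : ℝ) = θ k * inner ℝ w2 (S w1) := by
      rw [map_smul, inner_smul_right, hSsym w1 w2]
    rw [e9]
    have hθ1 := (hθ k).1
    have hθ2 := (hθ k).2
    nlinarith [hVIz, sq_nonneg (θ k)]

  -- θ(2-θ) lower bound
  have hθm : ∀ k, εθ ≤ θ k * (2 - θ k) := by
    intro k
    obtain ⟨h1, h2⟩ := hθ k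
    nlinarith
  -- dist recursion
  have hdist : ∀ k, d (k+1)^2 + θ k * (2 - θ k) * r k ^ 2 ≤ d k ^ 2 := by
    intro k
    set m : ℝ := θ k * (2 - θ k) * r k ^ 2 with hmdef
    have hm0 : 0 ≤ m := by
      have := hθm k
      nlinarith [sq_nonneg (r k), hεθ0]
    have h1 : ∀ z ∈ Z, Real.sqrt (d (k+1)^2 + m) ≤ pnorm S (x k - z) := by
      intro z hz
      have h2 : d (k+1) ≤ pnorm S (x (k+1) - z) := distS_le hz _
      have h3 := hFej k z hz
      have h4 : d (k+1)^2 + m ≤ pnorm S (x k - z)^2 := by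
        have h5 : 0 ≤ d (k+1) := hd0 _
        have h6 : 0 ≤ pnorm S (x (k+1) - z) := Real.sqrt_nonneg _
        nlinarith
      calc Real.sqrt (d (k+1)^2 + m) ≤ Real.sqrt (pnorm S (x k - z)^2) :=
        Real.sqrt_le_sqrt h4
      _ = pnorm S (x k - z) := Real.sqrt_sq (Real.sqrt_nonneg _)
    have h7 : Real.sqrt (d (k+1)^2 + m) ≤ d k := le_distS hzer h1
    have h8 : d (k+1)^2 + m = Real.sqrt (d (k+1)^2 + m)^2 :=
      (Real.sq_sqrt (by positivity)).symm
    nlinarith [Real.sqrt_nonneg (d (k+1)^2 + m), hd0 k]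
  have hdmono : ∀ k, d (k+1) ≤ d k := by
    intro k
    have h1 := hdist k
    have h2 : θ k * (2 - θ k) * r k ^ 2 ≥ 0 := by
      have := hθm k; nlinarith [sq_nonneg (r k), hεθ0]
    exact sq_le_imp_le (hd0 _) (hd0 _) (by nlinarith)
  have hrd : ∀ k, εθ * r k ^ 2 ≤ d k ^ 2 - d (k+1) ^ 2 := by
    intro k
    have h1 := hdist k
    have h2 := hθm k
    nlinarith [sq_nonneg (r k)]
  -- r → 0
  have hrsum : ∀ n, ∑ k ∈ Finset.range n, εθ * r k ^ 2 ≤ d 0 ^ 2 := by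
    intro n
    have key : ∀ n, ∑ k ∈ Finset.range n, εθ * r k ^ 2 ≤ d 0 ^ 2 - d n ^ 2 := by
      intro n
      induction n with
      | zero => simp
      | succ m ih =>
        rw [Finset.sum_range_succ]
        have := hrd m
        linarith
    have := key n
    nlinarith [sq_nonneg (d n)]
  have hrto0 : Tendsto r atTop (𝓝 0) := by
    have hsumm : Summable (fun k => εθ * r k ^ 2) :=
      summable_of_sum_range_le (fun k => by positivity) hrsum
    have h1 : Tendsto (fun k => εθ * r k ^ 2) atTop (𝓝 0) := hsumm.tendsto_atTop_zero
    have h2 : Tendsto (fun k => r k ^ 2) atTop (𝓝 0) := by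
      have h3 := h1.const_mul (1/εθ)
      simp only [mul_zero] at h3
      convert h3 using 2 with k
      field_simp
    have h4 : Tendsto (fun k => Real.sqrt (r k ^ 2)) atTop (𝓝 (Real.sqrt 0)) :=
      (Real.continuous_sqrt.tendsto 0).comp h2
    rw [Real.sqrt_zero] at h4
    convert h4 using 2 with k
    exact (Real.sqrt_sq (hr0 k)).symm
  -- strong monotonicity bound: σ * ‖x k - xh k‖ ≤ r k
  have hβ4' : (0:ℝ) < 1 - β/4 := by linarith
  set σ : ℝ := (1 - β/4) * cP * Real.sqrt cS / L' with hσdef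
  have hσ0 : 0 < σ :=
    div_pos (mul_pos (mul_pos hβ4' hcP0) (Real.sqrt_pos.2 hcS0)) hL'0
  have hxxh : ∀ k, σ * ‖x k - xh k‖ ≤ r k := by
    intro k
    by_cases hxe : x k = xh k
    · rw [hxe, sub_self, norm_zero, mul_zero]; exact hr0 k
    · have hne : 0 < ‖x k - xh k‖ := norm_pos_iff.mpr (sub_ne_zero.mpr hxe)
      have h1 := hMsm k (x k) (xh k)
      have h2 := (hp k).1
      have h3 : (inner ℝ (M k (x k) - M k (xh k)) (x k - p k) : ℝ)
          = inner ℝ (M k (x k) - M k (xh k)) (x k - xh k)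
            - inner ℝ (M k (x k) - M k (xh k)) (p k - xh k) := by
        simp only [inner_sub_right]; ring
      have h4 : (1 - β/4) * pnorm P (x k - xh k)^2
          ≤ inner ℝ (M k (x k) - M k (xh k)) (x k - p k) := by
        rw [h3]; nlinarith [h1, h2]
      have h5 := real_inner_le_norm (M k (x k) - M k (xh k)) (x k - p k)
      have h6 := hMlip' k (x k) (xh k)
      have h7 : Real.sqrt cS * ‖x k - p k‖ ≤ r k := by
        have h := sqrt_mul_norm_le_pnorm hcS0 hcS (x k - p k)
        calc Real.sqrt cS * ‖x k - p k‖ ≤ pnorm S (x k - p k) := h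
        _ = r k := (pnorm_sub_comm hSpos' (p k) (x k)).symm
      have h8 : cP * ‖x k - xh k‖^2 ≤ pnorm P (x k - xh k)^2 := by
        rw [pnorm_sq hPpos']; exact hcP _
      have key : ((1 - β/4) * cP * Real.sqrt cS) * ‖x k - xh k‖ * ‖x k - xh k‖
          ≤ (r k * L') * ‖x k - xh k‖ := by
        have hsS : 0 < Real.sqrt cS := Real.sqrt_pos.2 hcS0
        have h9 : (1 - β/4) * (cP * ‖x k - xh k‖^2)
            ≤ L' * ‖x k - xh k‖ * ‖x k - p k‖ := by
          nlinarith [h4, h5, h6, h8, norm_nonneg (x k - p k), norm_nonneg (M k (x k) - M k (xh k))]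
        nlinarith [mul_le_mul_of_nonneg_left h7 (mul_nonneg (le_of_lt hL'0) (norm_nonneg (x k - xh k))),
          mul_le_mul_of_nonneg_left h9 hsS.le, hsS, norm_nonneg (x k - xh k)]
      have key2 : ((1 - β/4) * cP * Real.sqrt cS) * ‖x k - xh k‖ ≤ r k * L' :=
        le_of_mul_le_mul_right (by nlinarith [key]) hne
      rw [hσdef, div_mul_eq_mul_div, div_le_iff₀ hL'0]
      linarith
  -- vv bounds
  set D : ℝ := Real.sqrt ‖S‖ * (L' + Lc) with hDdef
  have hD0 : 0 ≤ D := by positivity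
  have hvb2 : ∀ k, ‖vv k‖ ≤ (L' + Lc) * ‖x k - xh k‖ := by
    intro k
    have h1 : ‖vv k‖ ≤ ‖M k (x k) - M k (xh k)‖ + ‖C (x k) - C (xh k)‖ := by
      simp only [hvvdef]
      exact norm_sub_le _ _
    have h2 := hMlip' k (x k) (xh k)
    have h3 := hClip (x k) (xh k)
    calc ‖vv k‖ ≤ ‖M k (x k) - M k (xh k)‖ + ‖C (x k) - C (xh k)‖ := h1
    _ ≤ L' * ‖x k - xh k‖ + Lc * ‖x k - xh k‖ := by gcongr
    _ = (L' + Lc) * ‖x k - xh k‖ := by ring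
  have hvb : ∀ k, pnorm S (vv k) ≤ D * ‖x k - xh k‖ := by
    intro k
    calc pnorm S (vv k) ≤ Real.sqrt ‖S‖ * ‖vv k‖ := pnorm_le_sqrt_opNorm _
    _ ≤ Real.sqrt ‖S‖ * ((L' + Lc) * ‖x k - xh k‖) := by
        gcongr
        exact hvb2 k
    _ = D * ‖x k - xh k‖ := by rw [hDdef]; ring
  -- x - xh → 0
  have hΔto0 : Tendsto (fun k => ‖x k - xh k‖) atTop (𝓝 0) := by
    apply squeeze_zero (fun k => norm_nonneg _) (g := fun k => r k / σ)
    · intro k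
      rw [le_div_iff₀ hσ0]
      have := hxxh k
      linarith
    · have := hrto0.div_const σ
      simpa using this
  -- boundedness of x
  have hBx : ∃ B : ℝ, ∀ k, ‖x k‖ ≤ B := by
    have hmono2 : ∀ k, pnorm S (x (k+1) - z₀) ≤ pnorm S (x k - z₀) := by
      intro k
      have h1 := hFej k z₀ hz₀
      have h2 : θ k * (2 - θ k) * r k ^ 2 ≥ 0 := by
        have := hθm k; nlinarith [sq_nonneg (r k), hεθ0]
      exact sq_le_imp_le (Real.sqrt_nonneg _) (Real.sqrt_nonneg _) (by nlinarith)
    have hmono3 : ∀ k, pnorm S (x k - z₀) ≤ pnorm S (x 0 - z₀) := by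
      intro k
      induction k with
      | zero => exact le_rfl
      | succ n ih => exact le_trans (hmono2 n) ih
    refine ⟨‖z₀‖ + pnorm S (x 0 - z₀) / Real.sqrt cS, fun k => ?_⟩
    have hsS : 0 < Real.sqrt cS := Real.sqrt_pos.2 hcS0
    have h1 := sqrt_mul_norm_le_pnorm hcS0 hcS (x k - z₀)
    have h2 : ‖x k - z₀‖ ≤ pnorm S (x 0 - z₀) / Real.sqrt cS := by
      rw [le_div_iff₀ hsS]
      calc ‖x k - z₀‖ * Real.sqrt cS = Real.sqrt cS * ‖x k - z₀‖ := by ring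
      _ ≤ pnorm S (x k - z₀) := h1
      _ ≤ pnorm S (x 0 - z₀) := hmono3 k
    calc ‖x k‖ = ‖z₀ + (x k - z₀)‖ := by congr 1; abel
    _ ≤ ‖z₀‖ + ‖x k - z₀‖ := norm_add_le _ _
    _ ≤ ‖z₀‖ + pnorm S (x 0 - z₀) / Real.sqrt cS := by linarith
  obtain ⟨B, hB⟩ := hBx
  -- xh eventually bounded
  have hxhB : ∀ᶠ k in atTop, ‖xh k‖ ≤ B + 1 := by
    have h1 : ∀ᶠ k in atTop, ‖x k - xh k‖ < 1 :=
      hΔto0.eventually_lt_const one_pos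
    filter_upwards [h1] with k hk
    calc ‖xh k‖ = ‖x k - (x k - xh k)‖ := by congr 1; abel
    _ ≤ ‖x k‖ + ‖x k - xh k‖ := norm_sub_le _ _
    _ ≤ B + 1 := by have := hB k; linarith
  -- closedness of graph limit argument
  have hgraphlim : ∀ (w : ℕ → H) (u : ℕ → H) (wl ul : H),
      (∀ n, u n ∈ A (w n)) → Tendsto w atTop (𝓝 wl) → Tendsto u atTop (𝓝 ul) →
      ul ∈ A wl := by
    intro w u wl ul hmem hw hu
    apply hA.2
    intro y q hq
    have hseq : ∀ n, (0:ℝ) ≤ inner ℝ (u n - q) (w n - y) := fun n => hA.1 (hmem n) hq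
    have hlim : Tendsto (fun n => (inner ℝ (u n - q) (w n - y) : ℝ)) atTop
        (𝓝 (inner ℝ (ul - q) (wl - y))) :=
      Tendsto.inner ((hu.sub tendsto_const_nhds)) ((hw.sub tendsto_const_nhds))
    exact ge_of_tendsto hlim (Eventually.of_forall hseq)
  -- C is continuous along convergent sequences
  have hCcont : ∀ (w : ℕ → H) (wl : H), Tendsto w atTop (𝓝 wl) →
      Tendsto (fun n => C (w n)) atTop (𝓝 (C wl)) := by
    intro w wl hw
    rw [tendsto_iff_norm_sub_tendsto_zero]
    apply squeeze_zero (fun n => norm_nonneg _) (g := fun n => Lc * ‖w n - wl‖)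
    · intro n; exact hClip (w n) wl
    · have h1 : Tendsto (fun n => ‖w n - wl‖) atTop (𝓝 0) := by
        rw [← tendsto_iff_norm_sub_tendsto_zero]; exact hw
      have := h1.const_mul Lc
      simpa using this
  -- eventually xh k ∈ U
  have hUev : ∀ᶠ k in atTop, xh k ∈ U := by
    by_contra hcon
    rw [Filter.not_eventually] at hcon
    have hfreq : ∃ᶠ k in atTop, xh k ∈ (Metric.closedBall (0:H) (B+1) ∩ Uᶜ) := by
      apply (hcon.and_eventually hxhB).mono
      rintro k ⟨hk1, hk2⟩
      exact ⟨Metric.mem_closedBall.mpr (by simpa [dist_eq_norm] using hk2), hk1⟩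
    obtain ⟨φ, hφmono, hφ⟩ := extraction_of_frequently_atTop hfreq
    have hKcpt : IsCompact (Metric.closedBall (0:H) (B+1) ∩ Uᶜ) :=
      (isCompact_closedBall 0 (B+1)).inter_right hUopen.isClosed_compl
    obtain ⟨xs, hxsK, ψ, hψmono, hψ⟩ := hKcpt.tendsto_subseq hφ
    set χ : ℕ → ℕ := φ ∘ ψ with hχdef
    have hχtend : Tendsto χ atTop atTop := (hφmono.comp hψmono).tendsto_atTop
    have hxhχ : Tendsto (fun n => xh (χ n)) atTop (𝓝 xs) := hψ
    have hΔχ : Tendsto (fun n => ‖x (χ n) - xh (χ n)‖) atTop (𝓝 0) :=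
      hΔto0.comp hχtend
    have hxχ : Tendsto (fun n => x (χ n)) atTop (𝓝 xs) := by
      have h1 : Tendsto (fun n => (x (χ n) - xh (χ n)) + xh (χ n)) atTop (𝓝 (0 + xs)) := by
        apply Tendsto.add _ hxhχ
        rw [tendsto_zero_iff_norm_tendsto_zero]
        exact hΔχ
      simpa using h1
    have hvχ : Tendsto (fun n => vv (χ n)) atTop (𝓝 0) := by
      rw [tendsto_zero_iff_norm_tendsto_zero]
      apply squeeze_zero (fun n => norm_nonneg _) (g := fun n => (L' + Lc) * ‖x (χ n) - xh (χ n)‖)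
      · intro n; exact hvb2 (χ n)
      · have := hΔχ.const_mul (L' + Lc)
        simpa using this
    have hCχ : Tendsto (fun n => C (xh (χ n))) atTop (𝓝 (C xs)) := hCcont _ _ hxhχ
    have huχ : Tendsto (fun n => vv (χ n) - C (xh (χ n))) atTop (𝓝 (-C xs)) := by
      have := hvχ.sub hCχ
      simpa using this
    have hxsZ : xs ∈ Z := by
      rw [hZ]
      exact hgraphlim _ _ _ _ (fun n => hvvA (χ n)) hxhχ huχ
    exact hxsK.2 (hZU hxsZ)
  -- eventually pnorm S (vv k) < ν
  have hvS0 : Tendsto (fun k => pnorm S (vv k)) atTop (𝓝 0) := by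
    apply squeeze_zero (fun k => Real.sqrt_nonneg _) (g := fun k => D * ‖x k - xh k‖)
    · intro k; exact hvb k
    · have := hΔto0.const_mul D
      simpa using this
  have hνev : ∀ᶠ k in atTop, pnorm S (vv k) < ν := hvS0.eventually_lt_const hν
  obtain ⟨K₀, hK₀⟩ := (hUev.and hνev).exists_forall_of_atTop

  -- subregularity gives error bound
  have hsqcS : 0 < Real.sqrt cS := Real.sqrt_pos.2 hcS0
  set E1 : ℝ := Real.sqrt ‖S‖ + κ * D + 1 with hE1def
  have hE10 : 0 < E1 := by
    have : 0 ≤ κ * D := mul_nonneg hκ hD0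
    have := Real.sqrt_nonneg ‖S‖
    rw [hE1def]; linarith
  have hE : ∀ k ≥ K₀, d k ≤ (E1 / σ) * r k := by
    intro k hk
    obtain ⟨hkU, hkν⟩ := hK₀ k hk
    have h1 : distS S (xh k) Z ≤ κ * pnorm S (vv k) :=
      hsubreg (xh k) (vv k) hkU (hvvA k) hkν
    have h2 : d k ≤ pnorm S (x k - xh k) + distS S (xh k) Z :=
      distS_le_pnorm_add hSpos' hSsym hzer (x k) (xh k)
    have h3 : pnorm S (x k - xh k) ≤ Real.sqrt ‖S‖ * ‖x k - xh k‖ :=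
      pnorm_le_sqrt_opNorm _
    have h4 : κ * pnorm S (vv k) ≤ κ * (D * ‖x k - xh k‖) :=
      mul_le_mul_of_nonneg_left (hvb k) hκ
    have h5 : ‖x k - xh k‖ ≤ r k / σ := by
      rw [le_div_iff₀ hσ0]
      have := hxxh k
      linarith [mul_comm (‖x k - xh k‖) σ]
    have h6 : d k ≤ E1 * ‖x k - xh k‖ := by
      have h7 : 0 ≤ ‖x k - xh k‖ := norm_nonneg _
      rw [hE1def]
      nlinarith [h1, h2, h3, h4]
    calc d k ≤ E1 * ‖x k - xh k‖ := h6
    _ ≤ E1 * (r k / σ) := by gcongr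
    _ = (E1 / σ) * r k := by ring
  set Ecst : ℝ := E1 / σ with hEcstdef
  have hEcst0 : 0 < Ecst := div_pos hE10 hσ0
  set γ : ℝ := εθ / Ecst^2 with hγdef
  have hγ0 : 0 < γ := div_pos hεθ0 (pow_pos hEcst0 2)
  have hlin : ∀ k ≥ K₀, d (k+1)^2 ≤ (1 - γ) * d k^2 := by
    intro k hk
    have h1 := hdist k
    have h2 := hθm k
    have h3 := hE k hk
    have h4 : d k^2 ≤ Ecst^2 * r k^2 := by nlinarith [hd0 k, hr0 k, h3, hEcst0]
    have h5 : γ * Ecst^2 = εθ := div_mul_cancel₀ _ (ne_of_gt (pow_pos hEcst0 2))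
    have h6 : εθ * r k^2 ≤ θ k * (2-θ k) * r k^2 :=
      mul_le_mul_of_nonneg_right h2 (sq_nonneg _)
    have h7 : γ * d k^2 ≤ εθ * r k^2 := by
      calc γ * d k^2 ≤ γ * (Ecst^2 * r k^2) := mul_le_mul_of_nonneg_left h4 hγ0.le
      _ = (γ * Ecst^2) * r k^2 := by ring
      _ = εθ * r k^2 := by rw [h5]
    linarith
  set c : ℝ := max (Real.sqrt (max (1-γ) 0)) (1/2) with hcdef
  have hcpos : (0:ℝ) < c := lt_of_lt_of_le (by norm_num) (le_max_right _ _)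
  have hc1 : c < 1 := by
    apply max_lt _ (by norm_num)
    have h1 : max (1-γ) 0 < 1 := max_lt (by linarith) one_pos
    calc Real.sqrt (max (1-γ) 0) < Real.sqrt 1 := Real.sqrt_lt_sqrt (le_max_right _ _) h1
    _ = 1 := Real.sqrt_one
  have hc2 : (1-γ) ≤ c^2 := by
    have h1 : Real.sqrt (max (1-γ) 0) ≤ c := le_max_left _ _
    have h2 : max (1-γ) 0 = Real.sqrt (max (1-γ) 0)^2 := (Real.sq_sqrt (le_max_right _ _)).symm
    have h3 : Real.sqrt (max (1-γ) 0)^2 ≤ c^2 := by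
      nlinarith [Real.sqrt_nonneg (max (1-γ) 0)]
    calc (1-γ) ≤ max (1-γ) 0 := le_max_left _ _
    _ = Real.sqrt (max (1-γ) 0)^2 := h2
    _ ≤ c^2 := h3
  have hQlin : ∀ k ≥ K₀, d (k+1) ≤ c * d k := by
    intro k hk
    have h1 := hlin k hk
    have h2 : d (k+1)^2 ≤ (c * d k)^2 := by nlinarith [hc2, sq_nonneg (d k), hd0 k]
    exact sq_le_imp_le (hd0 _) (mul_nonneg hcpos.le (hd0 _)) h2
  have hgeo : ∀ k, K₀ ≤ k → d k ≤ d K₀ * c^(k - K₀) := by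
    intro k hk
    induction k, hk using Nat.le_induction with
    | base => simp
    | succ n hn ih =>
      have h1 := hQlin n hn
      have h2 : n + 1 - K₀ = (n - K₀) + 1 := by omega
      rw [h2, pow_succ]
      calc d (n+1) ≤ c * d n := h1
      _ ≤ c * (d K₀ * c^(n-K₀)) := mul_le_mul_of_nonneg_left ih hcpos.le
      _ = d K₀ * (c^(n-K₀) * c) := by ring
  have hsqεθ : 0 < Real.sqrt εθ := Real.sqrt_pos.2 hεθ0
  have hrk : ∀ k, Real.sqrt εθ * r k ≤ d k := by
    intro k
    have h1 := hrd k
    have h2 : (Real.sqrt εθ * r k)^2 ≤ d k^2 := by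
      have h3 : Real.sqrt εθ^2 = εθ := Real.sq_sqrt hεθ0.le
      nlinarith [sq_nonneg (d (k+1))]
    exact sq_le_imp_le (mul_nonneg hsqεθ.le (hr0 k)) (hd0 k) h2
  have hstep : ∀ k, K₀ ≤ k →
      pnorm S (x k - x (k+1)) ≤ (2 / Real.sqrt εθ) * d K₀ * c^(k-K₀) := by
    intro k hk
    have h1 : x k - x (k+1) = (-(θ k)) • (p k - x k) := by rw [hupd k]; module
    have h2 : pnorm S (x k - x (k+1)) = |(-(θ k))| * r k := by rw [h1, pnorm_smul]
    have hθk := hθ k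
    have h3 : |(-(θ k))| = θ k := by
      rw [abs_neg, abs_of_nonneg]; linarith [hθk.1, hεθ0]
    have h4 : θ k ≤ 2 := by linarith [hθk.2, hεθ0]
    have h5 : r k ≤ d k / Real.sqrt εθ := by
      rw [le_div_iff₀ hsqεθ]
      linarith [hrk k, mul_comm (r k) (Real.sqrt εθ)]
    have h6 : d k / Real.sqrt εθ ≤ (d K₀ * c^(k-K₀)) / Real.sqrt εθ := by
      gcongr
      exact hgeo k hk
    calc pnorm S (x k - x (k+1)) = θ k * r k := by rw [h2, h3]
    _ ≤ 2 * (d k / Real.sqrt εθ) := by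
        apply mul_le_mul h4 h5 (hr0 k) (by norm_num)
    _ ≤ 2 * ((d K₀ * c^(k-K₀)) / Real.sqrt εθ) := by linarith
    _ = (2 / Real.sqrt εθ) * d K₀ * c^(k-K₀) := by ring
  -- convergence
  have hnormstep : ∀ n, dist (x (n + K₀)) (x (n + 1 + K₀)) ≤
      ((2 / (Real.sqrt cS * Real.sqrt εθ)) * d K₀) * c^n := by
    intro n
    rw [show n + 1 + K₀ = n + K₀ + 1 from by omega]
    have h1 := hstep (n + K₀) (by omega)
    have h3 : n + K₀ - K₀ = n := by omega
    rw [h3] at h1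
    have h2 : Real.sqrt cS * ‖x (n+K₀) - x (n+K₀+1)‖ ≤ pnorm S (x (n+K₀) - x (n+K₀+1)) :=
      sqrt_mul_norm_le_pnorm hcS0 hcS _
    rw [dist_eq_norm]
    have h4 : ‖x (n+K₀) - x (n+K₀+1)‖ ≤ ((2/Real.sqrt εθ) * d K₀ * c^n) / Real.sqrt cS := by
      rw [le_div_iff₀ hsqcS]
      calc ‖x (n+K₀) - x (n+K₀+1)‖ * Real.sqrt cS
          = Real.sqrt cS * ‖x (n+K₀) - x (n+K₀+1)‖ := by ring
      _ ≤ pnorm S (x (n+K₀) - x (n+K₀+1)) := h2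
      _ ≤ (2/Real.sqrt εθ) * d K₀ * c^n := h1
    calc ‖x (n+K₀) - x (n+K₀+1)‖ ≤ ((2/Real.sqrt εθ) * d K₀ * c^n) / Real.sqrt cS := h4
    _ = ((2 / (Real.sqrt cS * Real.sqrt εθ)) * d K₀) * c^n := by
        field_simp [hsqcS.ne', hsqεθ.ne']
        try ring
        try exact Or.inl trivial
  have hcauchy : CauchySeq (fun n => x (n + K₀)) :=
    cauchySeq_of_le_geometric c _ hc1 hnormstep
  obtain ⟨xbar, hxbar⟩ := cauchySeq_tendsto_of_complete hcauchy
  have hxtend : Tendsto x atTop (𝓝 xbar) := (tendsto_add_atTop_iff_nat K₀).mp hxbar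
  -- xbar is a solution
  have hdZto0 : Tendsto d atTop (𝓝 0) := by
    have h1 : Tendsto (fun m : ℕ => c^m) atTop (𝓝 0) :=
      tendsto_pow_atTop_nhds_zero_of_lt_one hcpos.le hc1
    have hpow : Tendsto (fun k : ℕ => d K₀ * c^(k - K₀)) atTop (𝓝 0) := by
      have h2 := (h1.comp (tendsto_sub_atTop_nat K₀)).const_mul (d K₀)
      simpa [Function.comp] using h2
    apply squeeze_zero' (Eventually.of_forall hd0) _ hpow
    filter_upwards [eventually_ge_atTop K₀] with k hk
    exact hgeo k hk
  have hinf : ∀ k, Real.sqrt cS * Metric.infDist (x k) Z ≤ d k := by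
    intro k
    apply le_distS hzer
    intro z hz
    have h1 : Metric.infDist (x k) Z ≤ ‖x k - z‖ := by
      rw [← dist_eq_norm]
      exact Metric.infDist_le_dist_of_mem hz
    calc Real.sqrt cS * Metric.infDist (x k) Z ≤ Real.sqrt cS * ‖x k - z‖ := by gcongr
    _ ≤ pnorm S (x k - z) := sqrt_mul_norm_le_pnorm hcS0 hcS _
  have hinfto0 : Tendsto (fun k => Metric.infDist (x k) Z) atTop (𝓝 0) := by
    apply squeeze_zero (fun k => Metric.infDist_nonneg) (g := fun k => d k / Real.sqrt cS)
    · intro k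
      rw [le_div_iff₀ hsqcS]
      linarith [hinf k, mul_comm (Metric.infDist (x k) Z) (Real.sqrt cS)]
    · have := hdZto0.div_const (Real.sqrt cS)
      simpa using this
  have hZclosed : IsClosed Z := by
    rw [← isSeqClosed_iff_isClosed]
    intro zs zl hmem hzl
    rw [hZ]
    refine hgraphlim zs (fun n => -C (zs n)) zl (-C zl) (fun n => ?_) hzl
      ((hCcont zs zl hzl).neg)
    have := hmem n
    rw [hZ] at this
    exact this
  have hxbarZ : xbar ∈ Z := by
    rw [hZclosed.mem_iff_infDist_zero hzer]
    have h1 : Tendsto (fun k => Metric.infDist (x k) Z) atTop (𝓝 (Metric.infDist xbar Z)) :=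
      ((Metric.continuous_infDist_pt Z).tendsto xbar).comp hxtend
    exact tendsto_nhds_unique h1 hinfto0
  -- telescoping bound
  set G : ℝ := 2 / Real.sqrt εθ * d K₀ with hGdef
  have hG0 : 0 ≤ G := mul_nonneg (by positivity) (hd0 K₀)
  have htel : ∀ k, K₀ ≤ k → ∀ m : ℕ,
      pnorm S (x k - x (k+m)) ≤ G * c^(k-K₀) * ∑ i ∈ Finset.range m, c^i := by
    intro k hk m
    induction m with
    | zero => simp [pnorm]
    | succ m ih =>
      have h1 : pnorm S (x k - x (k+m+1)) ≤
          pnorm S (x k - x (k+m)) + pnorm S (x (k+m) - x (k+m+1)) :=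
        pnorm_triangle_sub hSpos' hSsym _ _ _
      have h2 := hstep (k+m) (by omega)
      have h3 : k + m - K₀ = (k - K₀) + m := by omega
      rw [h3, pow_add] at h2
      rw [Finset.sum_range_succ, show k + (m+1) = k + m + 1 from by omega]
      calc pnorm S (x k - x (k+m+1)) ≤
          pnorm S (x k - x (k+m)) + pnorm S (x (k+m) - x (k+m+1)) := h1
      _ ≤ G * c^(k-K₀) * ∑ i ∈ Finset.range m, c^i
            + (2/Real.sqrt εθ) * d K₀ * (c^(k-K₀) * c^m) := add_le_add ih h2
      _ = G * c^(k-K₀) * (∑ i ∈ Finset.range m, c^i + c^m) := by rw [hGdef]; ring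
  have hsumle : ∀ m : ℕ, ∑ i ∈ Finset.range m, c^i ≤ 1/(1-c) := by
    intro m
    have h2 := geom_sum_mul c m
    have h1 : (∑ i ∈ Finset.range m, c^i) * (1-c) = 1 - c^m := by
      have h4 : (∑ i ∈ Finset.range m, c^i) * (1-c)
          = -((∑ i ∈ Finset.range m, c^i) * (c-1)) := by ring
      rw [h4, h2]; ring
    rw [le_div_iff₀ (by linarith)]
    have h3 : (0:ℝ) ≤ c^m := pow_nonneg hcpos.le m
    linarith
  have hfin : ∀ k, K₀ ≤ k → pnorm S (x k - xbar) ≤ G * c^(k-K₀) * (1/(1-c)) := by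
    intro k hk
    have hcomp : Tendsto (fun m => x (k + m)) atTop (𝓝 xbar) := by
      have h := hxtend.comp (tendsto_add_atTop_nat k)
      have he : (fun m => x (k + m)) = x ∘ (fun m => m + k) := by
        funext m; simp [Function.comp, Nat.add_comm]
      rw [he]
      exact h
    have hlim : Tendsto (fun m => pnorm S (x k - x (k+m))) atTop
        (𝓝 (pnorm S (x k - xbar))) := by
      have hcont : Continuous (fun y : H => pnorm S (x k - y)) :=
        (continuous_pnorm (S := S)).comp (continuous_const.sub continuous_id)
      exact (hcont.tendsto xbar).comp hcomp
    apply le_of_tendsto hlim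
    filter_upwards with m
    have hnn : 0 ≤ G * c^(k-K₀) := mul_nonneg hG0 (pow_nonneg hcpos.le _)
    calc pnorm S (x k - x (k+m)) ≤ G * c^(k-K₀) * ∑ i ∈ Finset.range m, c^i := htel k hk m
    _ ≤ G * c^(k-K₀) * (1/(1-c)) := mul_le_mul_of_nonneg_left (hsumle m) hnn
  refine ⟨K₀, c, hcpos.le, hc1, fun k hk => hQlin k hk, xbar, hxbarZ,
    G * (1/(1-c)) / c^K₀, ?_, ?_⟩
  · have h1 : (0:ℝ) ≤ 1/(1-c) := by
      apply div_nonneg (by norm_num)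
      linarith
    exact div_nonneg (mul_nonneg hG0 h1) (pow_pos hcpos K₀).le
  · intro k hk
    have h1 := hfin k hk
    have h2 : c^(k-K₀) * c^K₀ = c^k := by
      rw [← pow_add]
      congr 1
      omega
    have hcK : (0:ℝ) < c^K₀ := pow_pos hcpos K₀
    calc pnorm S (x k - xbar) ≤ G * c^(k-K₀) * (1/(1-c)) := h1
    _ = G * (1/(1-c)) / c^K₀ * (c^(k-K₀) * c^K₀) := by
        have e : G * (1/(1-c)) / c^K₀ * (c^(k-K₀) * c^K₀)
            = G * (1/(1-c)) * c^(k-K₀) * (c^K₀ / c^K₀) := by ring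
        rw [e, div_self hcK.ne', mul_one]
        ring
    _ = G * (1/(1-c)) / c^K₀ * c^k := by rw [h2]
end
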